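/- arXiv:2307.08119 — 2 statements merged into one kernel-verified Lean document; each statement's English description precedes it below -/
import Mathlib

section
/- Let m ≥ 2 be an integer, a ∈ (0,1/m), and let ι : [0,1]³ → [0,1]³ be the involution ι(x,y,z) = (1−z, 1−y, 1−x). Then for every integer k ≥ 2, all φ_0,…,φ_{k−1} ∈ L^k(Leb), and all integers 0 = n_0 ≤ n_1 ≤ ⋯ ≤ n_{k−1}, one has |∫ ∏_{j=0}^{k−1} (φ_j∘g_a^{n_j}) dLeb − ∏_{j=0}^{k−1} ∫ φ_j dLeb| = |∫ ∏_{j=0}^{k−1} ((φ_j∘ι^{−1})∘g_{1/m−a}^{n_{k−1}−n_j}) dLeb − ∏_{j=0}^{k−1} ∫ φ_j∘ι^{−1} dLeb|. -/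
open MeasureTheory Set
open scoped ENNReal

noncomputable section

/-- The expanding base map `τ_a` on `[0,1]`. -/
def tauMap (m : ℕ) (a : ℝ) (x : ℝ) : ℝ :=
  if x < m * a then Int.fract (x / a) else (x - m * a) / (1 - m * a)

/-- The index `i ∈ {1,…,m}` such that `y ∈ [(i-1)/m, i/m)` (with `i = m` for `y = 1`). -/
def betaIdx (m : ℕ) (y : ℝ) : ℤ := if y = 1 then m else ⌊m * y⌋ + 1

/-- The heterochaos baker map `f_a`, as a self-map of `ℝ²`; only its restriction to the
unit square `[0,1]²` matters.  On `Ω⁺_{α_i} = [(i-1)a, ia) × [0,1]` (where `i - 1 = ⌊x/a⌋`)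
it is `(x,y) ↦ (τ_a x, y/m + (i-1)/m)`, and on `Ω⁺_{β_i}` (where `i = betaIdx m y`) it is
`(x,y) ↦ (τ_a x, m•y - i + 1)`, the affine surjection `[(i-1)/m, i/m) → [0,1)`. -/
def hbaker (m : ℕ) (a : ℝ) (p : ℝ × ℝ) : ℝ × ℝ :=
  if p.1 < m * a then
    (tauMap m a p.1, p.2 / m + (⌊p.1 / a⌋ : ℝ) / m)
  else
    (tauMap m a p.1, m * p.2 - ((betaIdx m p.2 : ℝ) - 1))

/-- The three-dimensional heterochaos baker map `f_{a,b}` on `[0,1]³` (as a self-map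
of `ℝ³`): `f_{a,b}(x,y,z) = (f_a(x,y), (1-mb)z)` on `Ω_{α_i}` and
`f_{a,b}(x,y,z) = (f_a(x,y), bz + 1 + b(i-m-1))` on `Ω_{β_i}`. -/
def hbaker3 (m : ℕ) (a b : ℝ) (p : ℝ × ℝ × ℝ) : ℝ × ℝ × ℝ :=
  ((hbaker m a (p.1, p.2.1)).1, (hbaker m a (p.1, p.2.1)).2,
    if p.1 < m * a then (1 - m * b) * p.2.2
    else b * p.2.2 + 1 + b * ((betaIdx m p.2.1 : ℝ) - m - 1))

/-- `g_a = f_{a, 1/m - a}`, the Lebesgue-measure-preserving member of the family. -/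
def gmap (m : ℕ) (a : ℝ) : ℝ × ℝ × ℝ → ℝ × ℝ × ℝ := hbaker3 m a (1 / m - a)

/-- The unit cube `[0,1]³`. -/
def unitCube : Set (ℝ × ℝ × ℝ) := Icc 0 1 ×ˢ Icc 0 1 ×ˢ Icc 0 1

/-- Lebesgue measure on `[0,1]³`. -/
def Leb3 : Measure (ℝ × ℝ × ℝ) := volume.restrict unitCube


/-- The involution `ι(x,y,z) = (1-z, 1-y, 1-x)` of `[0,1]³`; note `ι⁻¹ = ι`. -/
def iotaMap (p : ℝ × ℝ × ℝ) : ℝ × ℝ × ℝ := (1 - p.2.2, 1 - p.2.1, 1 - p.1)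



lemma aff_preimage_Ico (c d u v : ℝ) (hc : 0 < c) :
    (fun x => c*x+d) ⁻¹' (Ico u v) = Ico ((u-d)/c) ((v-d)/c) := by
  ext x
  simp only [mem_preimage, mem_Ico, div_le_iff₀ hc, lt_div_iff₀ hc]
  constructor <;> rintro ⟨h1, h2⟩ <;> constructor <;> nlinarith

lemma map_affine (c d : ℝ) (hc : c ≠ 0) :
    Measure.map (fun x => c*x+d) volume = ENNReal.ofReal |c⁻¹| • volume := by
  have h1 : (fun x : ℝ => c*x+d) = (fun x : ℝ => d + x) ∘ (fun x : ℝ => c * x) := by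
    funext x; simp [Function.comp]; ring
  rw [h1, ← Measure.map_map (measurable_const_add d) (measurable_const_mul c),
    Real.map_volume_mul_left hc, Measure.map_smul, map_add_left_eq_self]

lemma smul_prod_left {α β : Type*} [MeasurableSpace α] [MeasurableSpace β]
    (c : ℝ≥0∞) (μ : Measure α) (ν : Measure β) [SFinite ν] :
    (c • μ).prod ν = c • μ.prod ν := by
  ext s hs
  simp [Measure.prod_apply hs, lintegral_smul_measure]

lemma prod_smul_right {α β : Type*} [MeasurableSpace α] [MeasurableSpace β]
    (c : ℝ≥0∞) (hc : c ≠ ∞) (μ : Measure α) (ν : Measure β) [SFinite ν] :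
    μ.prod (c • ν) = c • μ.prod ν := by
  ext s hs
  rw [Measure.prod_apply hs, Measure.smul_apply, Measure.prod_apply hs]
  simp only [Measure.smul_apply, smul_eq_mul]
  rw [lintegral_const_mul' _ _ hc]

def aff3 (c₁ d₁ c₂ d₂ c₃ d₃ : ℝ) : ℝ × ℝ × ℝ → ℝ × ℝ × ℝ :=
  fun p => (c₁*p.1+d₁, (c₂*p.2.1+d₂, c₃*p.2.2+d₃))

lemma aff3_measurable (c₁ d₁ c₂ d₂ c₃ d₃ : ℝ) : Measurable (aff3 c₁ d₁ c₂ d₂ c₃ d₃) := by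
  unfold aff3
  fun_prop

lemma map_aff3 (c₁ d₁ c₂ d₂ c₃ d₃ : ℝ) (h₁ : c₁ ≠ 0) (h₂ : c₂ ≠ 0) (h₃ : c₃ ≠ 0) :
    Measure.map (aff3 c₁ d₁ c₂ d₂ c₃ d₃) volume =
      (ENNReal.ofReal |c₁⁻¹| * (ENNReal.ofReal |c₂⁻¹| * ENNReal.ofReal |c₃⁻¹|)) • volume := by
  have hall : aff3 c₁ d₁ c₂ d₂ c₃ d₃ =
      Prod.map (fun x => c₁*x+d₁) (Prod.map (fun x => c₂*x+d₂) (fun x => c₃*x+d₃)) := rfl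
  have hin : Measure.map (Prod.map (fun x => c₂*x+d₂) (fun x => c₃*x+d₃)) (volume : Measure (ℝ × ℝ))
      = (ENNReal.ofReal |c₂⁻¹| * ENNReal.ofReal |c₃⁻¹|) • volume := by
    rw [Measure.volume_eq_prod _ _, ← Measure.map_prod_map _ _ (by fun_prop) (by fun_prop),
      map_affine _ _ h₂, map_affine _ _ h₃, smul_prod_left,
      prod_smul_right _ ENNReal.ofReal_ne_top, smul_smul, ← Measure.volume_eq_prod _ _]
  rw [hall, Measure.volume_eq_prod _ _, ← Measure.map_prod_map _ _ (by fun_prop) (by fun_prop),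
    map_affine _ _ h₁, hin, smul_prod_left, prod_smul_right _ (by
      exact ENNReal.mul_ne_top ENNReal.ofReal_ne_top ENNReal.ofReal_ne_top),
    smul_smul, ← Measure.volume_eq_prod _ _]

lemma measurePreserving_aff3 (c₁ d₁ c₂ d₂ c₃ d₃ : ℝ) (h₁ : 0 < c₁) (h₂ : 0 < c₂) (h₃ : 0 < c₃)
    (hdet : c₁ * c₂ * c₃ = 1) :
    MeasurePreserving (aff3 c₁ d₁ c₂ d₂ c₃ d₃) volume volume := by
  refine ⟨aff3_measurable _ _ _ _ _ _, ?_⟩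
  rw [map_aff3 _ _ _ _ _ _ h₁.ne' h₂.ne' h₃.ne']
  have : ENNReal.ofReal |c₁⁻¹| * (ENNReal.ofReal |c₂⁻¹| * ENNReal.ofReal |c₃⁻¹|) = 1 := by
    rw [← ENNReal.ofReal_mul (abs_nonneg _), ← ENNReal.ofReal_mul (abs_nonneg _),
      ← abs_mul, ← abs_mul, ← mul_inv, ← mul_inv, ← mul_assoc, hdet]
    simp
  rw [this, one_smul]



lemma iUnion_Ico_grid (o c : ℝ) (hc : 0 ≤ c) (M : ℕ) :
    (⋃ i ∈ Finset.range M, Ico (o + (i:ℝ)*c) (o + ((i:ℝ)+1)*c)) = Ico o (o + M*c) := by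
  induction M with
  | zero => simp
  | succ M ih =>
    rw [Finset.range_add_one, Finset.set_biUnion_insert, ih, union_comm,
      Ico_union_Ico_eq_Ico (by nlinarith) (by nlinarith)]
    norm_cast

lemma grid_disjoint (o c : ℝ) (hc : 0 ≤ c) {i j : ℕ} (hij : i ≠ j) :
    Disjoint (Ico (o + (i:ℝ)*c) (o + ((i:ℝ)+1)*c)) (Ico (o + (j:ℝ)*c) (o + ((j:ℝ)+1)*c)) := by
  rcases hij.lt_or_gt with h | h
  ·
    rw [Set.Ico_disjoint_Ico]
    have : ((i:ℝ)+1) ≤ (j:ℝ) := by exact_mod_cast h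
    refine le_trans (min_le_left _ _) (le_trans ?_ (le_max_right _ _))
    nlinarith
  · rw [Set.Ico_disjoint_Ico]
    have : ((j:ℝ)+1) ≤ (i:ℝ) := by exact_mod_cast h
    refine le_trans (min_le_right _ _) (le_trans ?_ (le_max_left _ _))
    nlinarith

lemma grid_bad (o c : ℝ) (M : ℕ) :
    Ico o (o + M*c) ⊆ (⋃ i ∈ Finset.range M, Ioo (o + (i:ℝ)*c) (o + ((i:ℝ)+1)*c)) ∪
      (⋃ i ∈ Finset.range (M+1), {o + (i:ℝ)*c}) := by
  induction M with
  | zero => simp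
  | succ M ih =>
    intro x hx
    rcases lt_or_ge x (o + M*c) with h | h
    · have hx' : x ∈ Ico o (o + M*c) := ⟨hx.1, h⟩
      rcases ih hx' with h1 | h1
      · left
        simp only [mem_iUnion, Finset.mem_range] at h1 ⊢
        obtain ⟨i, hi, hxi⟩ := h1
        exact ⟨i, by omega, hxi⟩
      · right
        simp only [mem_iUnion, Finset.mem_range] at h1 ⊢
        obtain ⟨i, hi, hxi⟩ := h1
        exact ⟨i, by omega, hxi⟩
    · rcases eq_or_lt_of_le h with heq | hlt
      · right
        simp only [mem_iUnion, Finset.mem_range]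
        exact ⟨M, by omega, heq.symm⟩
      · left
        simp only [mem_iUnion, Finset.mem_range]
        refine ⟨M, by omega, hlt, ?_⟩
        have := hx.2
        push_cast at this ⊢
        linarith

lemma null_slice1 (s : Set ℝ) (hs : volume s = 0) :
    volume (s ×ˢ (univ : Set (ℝ × ℝ))) = 0 := by
  rw [Measure.volume_eq_prod, Measure.prod_prod, hs, zero_mul]

lemma null_slice2 (s : Set ℝ) (hs : volume s = 0) :
    volume ((univ : Set ℝ) ×ˢ s ×ˢ (univ : Set ℝ)) = 0 := by
  rw [Measure.volume_eq_prod, Measure.prod_prod, Measure.volume_eq_prod, Measure.prod_prod,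
    hs, zero_mul, mul_zero]

lemma null_slice3 (s : Set ℝ) (hs : volume s = 0) :
    volume ((univ : Set ℝ) ×ˢ (univ : Set ℝ) ×ˢ s) = 0 := by
  rw [Measure.volume_eq_prod, Measure.prod_prod, Measure.volume_eq_prod, Measure.prod_prod,
    hs, mul_zero, mul_zero]



lemma hbaker3_pos (m : ℕ) (a b : ℝ) (p : ℝ × ℝ × ℝ) (h : p.1 < m * a) :
    hbaker3 m a b p =
      (Int.fract (p.1 / a), p.2.1 / m + (⌊p.1 / a⌋ : ℝ) / m, (1 - m * b) * p.2.2) := by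
  simp [hbaker3, hbaker, tauMap, h]

lemma hbaker3_neg (m : ℕ) (a b : ℝ) (p : ℝ × ℝ × ℝ) (h : ¬ p.1 < m * a) :
    hbaker3 m a b p =
      ((p.1 - m * a) / (1 - m * a), m * p.2.1 - ((betaIdx m p.2.1 : ℝ) - 1),
        b * p.2.2 + 1 + b * ((betaIdx m p.2.1 : ℝ) - m - 1)) := by
  simp [hbaker3, hbaker, tauMap, h]

lemma measurable_betaIdx_cast (m : ℕ) : Measurable (fun y : ℝ => ((betaIdx m y : ℝ))) := by
  have : Measurable (betaIdx m) := by
    unfold betaIdx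
    refine Measurable.ite ?_ measurable_const ?_
    · exact measurableSet_eq
    · exact ((measurable_const.mul measurable_id).floor).add_const 1
  exact (measurable_from_top (f := (Int.cast : ℤ → ℝ))).comp this

lemma measurable_hbaker3 (m : ℕ) (a b : ℝ) : Measurable (hbaker3 m a b) := by
  have hcond : MeasurableSet {p : ℝ × ℝ × ℝ | p.1 < m * a} :=
    measurableSet_lt measurable_fst measurable_const
  have htau0 : Measurable (tauMap m a) := by
    unfold tauMap
    exact Measurable.ite (measurableSet_lt measurable_id measurable_const)
      ((measurable_id.div_const a).fract) ((measurable_id.sub_const _).div_const _)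
  have htau : Measurable (fun p : ℝ × ℝ × ℝ => tauMap m a p.1) := htau0.comp measurable_fst
  have hfloor : Measurable (fun p : ℝ × ℝ × ℝ => ((⌊p.1 / a⌋ : ℤ) : ℝ)) :=
    (measurable_from_top (f := (Int.cast : ℤ → ℝ))).comp (measurable_fst.div_const a).floor
  have hbeta : Measurable (fun p : ℝ × ℝ × ℝ => ((betaIdx m p.2.1 : ℝ))) :=
    (measurable_betaIdx_cast m).comp (measurable_snd.fst)
  have h2 : Measurable (fun p : ℝ × ℝ × ℝ => (hbaker m a (p.1, p.2.1)).2) := by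
    have : (fun p : ℝ × ℝ × ℝ => (hbaker m a (p.1, p.2.1)).2) =
        fun p => if p.1 < m * a then p.2.1 / m + ((⌊p.1 / a⌋ : ℤ) : ℝ) / m
          else m * p.2.1 - (((betaIdx m p.2.1 : ℝ)) - 1) := by
      funext p; by_cases h : p.1 < m * a <;> simp [hbaker, h]
    rw [this]
    refine Measurable.ite hcond ?_ ?_
    · exact (measurable_snd.fst.div_const _).add (hfloor.div_const _)
    · exact (measurable_const.mul measurable_snd.fst).sub (hbeta.sub_const 1)
  have h1 : Measurable (fun p : ℝ × ℝ × ℝ => (hbaker m a (p.1, p.2.1)).1) := by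
    have : (fun p : ℝ × ℝ × ℝ => (hbaker m a (p.1, p.2.1)).1) =
        fun p : ℝ × ℝ × ℝ => tauMap m a p.1 := by
      funext p; by_cases h : p.1 < m * a <;> simp [hbaker, h]
    rw [this]; exact htau
  have h3 : Measurable (fun p : ℝ × ℝ × ℝ =>
      if p.1 < m * a then (1 - m * b) * p.2.2
      else b * p.2.2 + 1 + b * ((betaIdx m p.2.1 : ℝ) - m - 1)) := by
    refine Measurable.ite hcond ?_ ?_
    · exact measurable_const.mul measurable_snd.snd
    · exact ((measurable_const.mul measurable_snd.snd).add_const 1).add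
        (measurable_const.mul ((hbeta.sub_const _).sub_const _))
  exact h1.prodMk (h2.prodMk h3)



def Pa (a : ℝ) (i : ℕ) : Set (ℝ × ℝ × ℝ) :=
  Ico ((i:ℝ)*a) (((i:ℝ)+1)*a) ×ˢ Ico (0:ℝ) 1 ×ˢ Ico (0:ℝ) 1

def Pb (m : ℕ) (a : ℝ) (j : ℕ) : Set (ℝ × ℝ × ℝ) :=
  Ico ((m:ℝ)*a) 1 ×ˢ Ico ((j:ℝ)*(1/(m:ℝ))) (((j:ℝ)+1)*(1/(m:ℝ))) ×ˢ Ico (0:ℝ) 1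

def Qa (m : ℕ) (a : ℝ) (i : ℕ) : Set (ℝ × ℝ × ℝ) :=
  Ico (0:ℝ) 1 ×ˢ Ico ((i:ℝ)*(1/(m:ℝ))) (((i:ℝ)+1)*(1/(m:ℝ))) ×ˢ Ico (0:ℝ) ((m:ℝ)*a)

def Qb (m : ℕ) (a : ℝ) (j : ℕ) : Set (ℝ × ℝ × ℝ) :=
  Ico (0:ℝ) 1 ×ˢ Ico (0:ℝ) 1 ×ˢ
    Ico ((m:ℝ)*a + (j:ℝ)*(1/(m:ℝ)-a)) ((m:ℝ)*a + ((j:ℝ)+1)*(1/(m:ℝ)-a))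

def cubeIco : Set (ℝ × ℝ × ℝ) := Ico (0:ℝ) 1 ×ˢ Ico (0:ℝ) 1 ×ˢ Ico (0:ℝ) 1

lemma hm0 {m : ℕ} (hm : 2 ≤ m) : (0:ℝ) < m := by
  have : (2:ℝ) ≤ m := by exact_mod_cast hm
  linarith

lemma hma1 {m : ℕ} {a : ℝ} (hm : 2 ≤ m) (ha : a ∈ Ioo (0:ℝ) (1/m)) : (m:ℝ) * a < 1 := by
  have h2 := ha.2
  rw [lt_div_iff₀ (hm0 hm)] at h2
  linarith

lemma hb0 {m : ℕ} {a : ℝ} (ha : a ∈ Ioo (0:ℝ) (1/m)) : 0 < 1/(m:ℝ) - a := by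
  have := ha.2; linarith

lemma hYunion {m : ℕ} (hm : 2 ≤ m) :
    (⋃ i ∈ Finset.range m, Ico ((i:ℝ)*(1/(m:ℝ))) (((i:ℝ)+1)*(1/(m:ℝ)))) = Ico (0:ℝ) 1 := by
  have hYu := iUnion_Ico_grid 0 (1/(m:ℝ)) (by positivity) m
  simp only [zero_add] at hYu
  rwa [mul_one_div, div_self (hm0 hm).ne'] at hYu

lemma cube_union_P {m : ℕ} {a : ℝ} (hm : 2 ≤ m) (ha : a ∈ Ioo (0:ℝ) (1/m)) :
    cubeIco = (⋃ i ∈ Finset.range m, Pa a i) ∪ (⋃ j ∈ Finset.range m, Pb m a j) := by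
  have hXu := iUnion_Ico_grid 0 a ha.1.le m
  simp only [zero_add] at hXu
  have h1 : (⋃ i ∈ Finset.range m, Pa a i) =
      Ico (0:ℝ) ((m:ℝ)*a) ×ˢ Ico (0:ℝ) 1 ×ˢ Ico (0:ℝ) 1 := by
    rw [← hXu]
    ext p
    simp only [Pa, mem_iUnion, Set.mem_prod, Finset.mem_range]
    constructor
    · rintro ⟨i, hi, h1, h2⟩; exact ⟨⟨i, hi, h1⟩, h2⟩
    · rintro ⟨⟨i, hi, h1⟩, h2⟩; exact ⟨i, hi, h1, h2⟩
  have h2 : (⋃ j ∈ Finset.range m, Pb m a j) =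
      Ico ((m:ℝ)*a) 1 ×ˢ Ico (0:ℝ) 1 ×ˢ Ico (0:ℝ) 1 := by
    have h2' : (⋃ j ∈ Finset.range m, Pb m a j) =
        Ico ((m:ℝ)*a) 1 ×ˢ
          (⋃ j ∈ Finset.range m, Ico ((j:ℝ)*(1/(m:ℝ))) (((j:ℝ)+1)*(1/(m:ℝ)))) ×ˢ
          Ico (0:ℝ) 1 := by
      ext p
      simp only [Pb, mem_iUnion, Set.mem_prod, Finset.mem_range]
      constructor
      · rintro ⟨j, hj, h1, h2, h3⟩; exact ⟨h1, ⟨j, hj, h2⟩, h3⟩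
      · rintro ⟨h1, ⟨j, hj, h2⟩, h3⟩; exact ⟨j, hj, h1, h2, h3⟩
    rw [h2', hYunion hm]
  have hma0 : (0:ℝ) ≤ (m:ℝ)*a := le_of_lt (mul_pos (hm0 hm) ha.1)
  rw [h1, h2, ← Set.union_prod, Ico_union_Ico_eq_Ico hma0 (hma1 hm ha).le]
  rfl

lemma cube_union_Q {m : ℕ} {a : ℝ} (hm : 2 ≤ m) (ha : a ∈ Ioo (0:ℝ) (1/m)) :
    cubeIco = (⋃ i ∈ Finset.range m, Qa m a i) ∪ (⋃ j ∈ Finset.range m, Qb m a j) := by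
  have hZu := iUnion_Ico_grid ((m:ℝ)*a) (1/(m:ℝ)-a) (hb0 ha).le m
  rw [show (m:ℝ)*a + m*(1/(m:ℝ)-a) = 1 by field_simp; ring] at hZu
  have h1 : (⋃ i ∈ Finset.range m, Qa m a i) =
      Ico (0:ℝ) 1 ×ˢ Ico (0:ℝ) 1 ×ˢ Ico (0:ℝ) ((m:ℝ)*a) := by
    have h1' : (⋃ i ∈ Finset.range m, Qa m a i) =
        Ico (0:ℝ) 1 ×ˢ
          (⋃ i ∈ Finset.range m, Ico ((i:ℝ)*(1/(m:ℝ))) (((i:ℝ)+1)*(1/(m:ℝ)))) ×ˢ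
          Ico (0:ℝ) ((m:ℝ)*a) := by
      ext p
      simp only [Qa, mem_iUnion, Set.mem_prod, Finset.mem_range]
      constructor
      · rintro ⟨j, hj, h1, h2, h3⟩; exact ⟨h1, ⟨j, hj, h2⟩, h3⟩
      · rintro ⟨h1, ⟨j, hj, h2⟩, h3⟩; exact ⟨j, hj, h1, h2, h3⟩
    rw [h1', hYunion hm]
  have h2 : (⋃ j ∈ Finset.range m, Qb m a j) =
      Ico (0:ℝ) 1 ×ˢ Ico (0:ℝ) 1 ×ˢ Ico ((m:ℝ)*a) 1 := by
    rw [← hZu]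
    ext p
    simp only [Qb, mem_iUnion, Set.mem_prod, Finset.mem_range]
    constructor
    · rintro ⟨j, hj, h1, h2, h3⟩; exact ⟨h1, h2, ⟨j, hj, h3⟩⟩
    · rintro ⟨h1, h2, ⟨j, hj, h3⟩⟩; exact ⟨j, hj, h1, h2, h3⟩
  have hma0 : (0:ℝ) ≤ (m:ℝ)*a := le_of_lt (mul_pos (hm0 hm) ha.1)
  rw [h1, h2, ← Set.prod_union, ← Set.prod_union,
    Ico_union_Ico_eq_Ico hma0 (hma1 hm ha).le]
  rfl



-- ### per-piece analysis

lemma floor_eq_of_Ico {c : ℝ} (hc : 0 < c) {i : ℕ} {x : ℝ}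
    (h1 : (i:ℝ)*c ≤ x) (h2 : x < ((i:ℝ)+1)*c) : ⌊x/c⌋ = (i:ℤ) := by
  rw [Int.floor_eq_iff]
  constructor
  · push_cast
    rw [le_div_iff₀ hc]
    nlinarith
  · push_cast
    rw [div_lt_iff₀ hc]
    nlinarith

lemma gmap_on_Pa {m : ℕ} {a : ℝ} (hm : 2 ≤ m) (ha : a ∈ Ioo (0:ℝ) (1/m))
    {i : ℕ} (hi : i < m) {p : ℝ × ℝ × ℝ} (hp : p ∈ Pa a i) :
    gmap m a p = aff3 a⁻¹ (-(i:ℝ)) (m:ℝ)⁻¹ ((i:ℝ)*(m:ℝ)⁻¹) ((m:ℝ)*a) 0 p := by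
  obtain ⟨hx, hy, hz⟩ := hp
  have hm0' := hm0 hm
  have ha0 := ha.1
  have hi' : ((i:ℝ)+1) ≤ (m:ℝ) := by exact_mod_cast hi
  have hxlt : p.1 < m*a := lt_of_lt_of_le hx.2 (by nlinarith)
  have hfl : ⌊p.1/a⌋ = (i:ℤ) := floor_eq_of_Ico ha0 hx.1 hx.2
  show hbaker3 m a (1/m - a) p = _
  rw [hbaker3_pos _ _ _ _ hxlt, Int.fract, hfl]
  unfold aff3
  simp only [Prod.mk.injEq]
  refine ⟨?_, ?_, ?_⟩
  · push_cast; field_simp <;> ring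
  · push_cast; field_simp <;> ring
  · field_simp <;> ring

lemma Pa_preimage {m : ℕ} {a : ℝ} (hm : 2 ≤ m) (ha : a ∈ Ioo (0:ℝ) (1/m)) (i : ℕ) :
    aff3 a⁻¹ (-(i:ℝ)) (m:ℝ)⁻¹ ((i:ℝ)*(m:ℝ)⁻¹) ((m:ℝ)*a) 0 ⁻¹' (Qa m a i) = Pa a i := by
  have hm0' := hm0 hm
  have ha0 := ha.1
  have ha0' : (0:ℝ) < a⁻¹ := by positivity
  have hmi : (0:ℝ) < (m:ℝ)⁻¹ := by positivity
  have hma : (0:ℝ) < (m:ℝ)*a := by positivity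
  unfold Qa Pa
  rw [show (aff3 a⁻¹ (-(i:ℝ)) (m:ℝ)⁻¹ ((i:ℝ)*(m:ℝ)⁻¹) ((m:ℝ)*a) 0) ⁻¹'
      (Ico (0:ℝ) 1 ×ˢ Ico ((i:ℝ)*(1/(m:ℝ))) (((i:ℝ)+1)*(1/(m:ℝ))) ×ˢ Ico (0:ℝ) ((m:ℝ)*a)) =
      ((fun x => a⁻¹*x + -(i:ℝ)) ⁻¹' Ico (0:ℝ) 1) ×ˢ
      ((fun x => (m:ℝ)⁻¹*x + (i:ℝ)*(m:ℝ)⁻¹) ⁻¹' Ico ((i:ℝ)*(1/(m:ℝ))) (((i:ℝ)+1)*(1/(m:ℝ)))) ×ˢ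
      ((fun x => ((m:ℝ)*a)*x + 0) ⁻¹' Ico (0:ℝ) ((m:ℝ)*a)) from rfl,
    aff_preimage_Ico _ _ _ _ ha0', aff_preimage_Ico _ _ _ _ hmi, aff_preimage_Ico _ _ _ _ hma,
    show ((0:ℝ) - -(i:ℝ))/a⁻¹ = (i:ℝ)*a by rw [zero_sub, neg_neg, div_eq_mul_inv, inv_inv],
    show ((1:ℝ) - -(i:ℝ))/a⁻¹ = ((i:ℝ)+1)*a by rw [div_eq_mul_inv, inv_inv]; ring,
    show ((i:ℝ)*(1/(m:ℝ)) - (i:ℝ)*(m:ℝ)⁻¹)/(m:ℝ)⁻¹ = 0 by rw [one_div, sub_self, zero_div],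
    show (((i:ℝ)+1)*(1/(m:ℝ)) - (i:ℝ)*(m:ℝ)⁻¹)/(m:ℝ)⁻¹ = 1 by
      rw [one_div, div_eq_mul_inv, inv_inv,
        show ((i:ℝ)+1)*(m:ℝ)⁻¹ - (i:ℝ)*(m:ℝ)⁻¹ = (m:ℝ)⁻¹ from by ring,
        inv_mul_cancel₀ hm0'.ne'],
    show ((0:ℝ) - 0)/((m:ℝ)*a) = 0 by rw [sub_self, zero_div],
    show ((m:ℝ)*a - 0)/((m:ℝ)*a) = 1 by rw [sub_zero]; field_simp]

lemma gmap_on_Pb {m : ℕ} {a : ℝ} (hm : 2 ≤ m) (ha : a ∈ Ioo (0:ℝ) (1/m))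
    {j : ℕ} (hj : j < m) {p : ℝ × ℝ × ℝ} (hp : p ∈ Pb m a j) :
    gmap m a p = aff3 (1-(m:ℝ)*a)⁻¹ (-((m:ℝ)*a)*(1-(m:ℝ)*a)⁻¹) (m:ℝ) (-(j:ℝ))
      (1/(m:ℝ)-a) ((m:ℝ)*a + (j:ℝ)*(1/(m:ℝ)-a)) p := by
  obtain ⟨hx, hy, hz⟩ := hp
  have hm0' := hm0 hm
  have ha0 := ha.1
  have hden : (0:ℝ) < 1 - (m:ℝ)*a := by nlinarith [hma1 hm ha]
  have hj' : ((j:ℝ)+1) ≤ (m:ℝ) := by exact_mod_cast hj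
  have hnot : ¬ p.1 < (m:ℝ)*a := not_lt.mpr hx.1
  have hylt1 : p.2.1 < 1 := by
    have h2 := hy.2
    have : ((j:ℝ)+1)*(1/(m:ℝ)) ≤ 1 := by
      rw [mul_one_div, div_le_one hm0']
      exact hj'
    linarith
  have hyne : p.2.1 ≠ 1 := ne_of_lt hylt1
  have hfl : ⌊(m:ℝ)*p.2.1⌋ = (j:ℤ) := by
    rw [Int.floor_eq_iff]
    constructor
    · push_cast
      calc (j:ℝ) = ((j:ℝ)*(1/(m:ℝ)))*(m:ℝ) := by field_simp
        _ ≤ p.2.1*(m:ℝ) := mul_le_mul_of_nonneg_right hy.1 hm0'.le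
        _ = (m:ℝ)*p.2.1 := mul_comm _ _
    · push_cast
      calc (m:ℝ)*p.2.1 = p.2.1*(m:ℝ) := mul_comm _ _
        _ < (((j:ℝ)+1)*(1/(m:ℝ)))*(m:ℝ) := mul_lt_mul_of_pos_right hy.2 hm0'
        _ = (j:ℝ)+1 := by field_simp
  have hbeta : betaIdx m p.2.1 = (j:ℤ) + 1 := by
    unfold betaIdx
    rw [if_neg hyne, hfl]
  show hbaker3 m a (1/m - a) p = _
  rw [hbaker3_neg _ _ _ _ hnot, hbeta]
  unfold aff3
  simp only [Prod.mk.injEq]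
  refine ⟨?_, ?_, ?_⟩
  · field_simp <;> ring
  · push_cast; ring
  · push_cast; field_simp <;> ring

lemma Pb_preimage {m : ℕ} {a : ℝ} (hm : 2 ≤ m) (ha : a ∈ Ioo (0:ℝ) (1/m)) (j : ℕ) :
    aff3 (1-(m:ℝ)*a)⁻¹ (-((m:ℝ)*a)*(1-(m:ℝ)*a)⁻¹) (m:ℝ) (-(j:ℝ))
      (1/(m:ℝ)-a) ((m:ℝ)*a + (j:ℝ)*(1/(m:ℝ)-a)) ⁻¹' (Qb m a j) = Pb m a j := by
  have hm0' := hm0 hm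
  have ha0 := ha.1
  have hden : (0:ℝ) < 1 - (m:ℝ)*a := by nlinarith [hma1 hm ha]
  have hden' : (0:ℝ) < (1-(m:ℝ)*a)⁻¹ := by positivity
  have hb0' : (0:ℝ) < 1/(m:ℝ) - a := hb0 ha
  unfold Qb Pb
  rw [show (aff3 (1-(m:ℝ)*a)⁻¹ (-((m:ℝ)*a)*(1-(m:ℝ)*a)⁻¹) (m:ℝ) (-(j:ℝ))
      (1/(m:ℝ)-a) ((m:ℝ)*a + (j:ℝ)*(1/(m:ℝ)-a))) ⁻¹'
      (Ico (0:ℝ) 1 ×ˢ Ico (0:ℝ) 1 ×ˢ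
        Ico ((m:ℝ)*a + (j:ℝ)*(1/(m:ℝ)-a)) ((m:ℝ)*a + ((j:ℝ)+1)*(1/(m:ℝ)-a))) =
      ((fun x => (1-(m:ℝ)*a)⁻¹*x + -((m:ℝ)*a)*(1-(m:ℝ)*a)⁻¹) ⁻¹' Ico (0:ℝ) 1) ×ˢ
      ((fun x => (m:ℝ)*x + -(j:ℝ)) ⁻¹' Ico (0:ℝ) 1) ×ˢ
      ((fun x => (1/(m:ℝ)-a)*x + ((m:ℝ)*a + (j:ℝ)*(1/(m:ℝ)-a))) ⁻¹'
        Ico ((m:ℝ)*a + (j:ℝ)*(1/(m:ℝ)-a)) ((m:ℝ)*a + ((j:ℝ)+1)*(1/(m:ℝ)-a))) from rfl,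
    aff_preimage_Ico _ _ _ _ hden', aff_preimage_Ico _ _ _ _ hm0',
    aff_preimage_Ico _ _ _ _ hb0',
    show ((0:ℝ) - -((m:ℝ)*a)*(1-(m:ℝ)*a)⁻¹)/(1-(m:ℝ)*a)⁻¹ = (m:ℝ)*a by field_simp; ring,
    show ((1:ℝ) - -((m:ℝ)*a)*(1-(m:ℝ)*a)⁻¹)/(1-(m:ℝ)*a)⁻¹ = 1 by field_simp; ring,
    show ((0:ℝ) - -(j:ℝ))/(m:ℝ) = (j:ℝ)*(1/(m:ℝ)) by field_simp; ring,
    show ((1:ℝ) - -(j:ℝ))/(m:ℝ) = ((j:ℝ)+1)*(1/(m:ℝ)) by field_simp <;> ring,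
    show (((m:ℝ)*a + (j:ℝ)*(1/(m:ℝ)-a)) - ((m:ℝ)*a + (j:ℝ)*(1/(m:ℝ)-a)))/(1/(m:ℝ)-a) = 0 by
      simp,
    show (((m:ℝ)*a + ((j:ℝ)+1)*(1/(m:ℝ)-a)) - ((m:ℝ)*a + (j:ℝ)*(1/(m:ℝ)-a)))/(1/(m:ℝ)-a) = 1 by
      field_simp <;> ring]

lemma mp_Aa {m : ℕ} {a : ℝ} (hm : 2 ≤ m) (ha : a ∈ Ioo (0:ℝ) (1/m)) (i : ℕ) :
    MeasurePreserving (aff3 a⁻¹ (-(i:ℝ)) (m:ℝ)⁻¹ ((i:ℝ)*(m:ℝ)⁻¹) ((m:ℝ)*a) 0) volume volume := by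
  have hm0' := hm0 hm
  have ha0 := ha.1
  exact measurePreserving_aff3 _ _ _ _ _ _ (by positivity) (by positivity) (by positivity)
    (by field_simp <;> ring)

lemma mp_Ab {m : ℕ} {a : ℝ} (hm : 2 ≤ m) (ha : a ∈ Ioo (0:ℝ) (1/m)) (j : ℕ) :
    MeasurePreserving (aff3 (1-(m:ℝ)*a)⁻¹ (-((m:ℝ)*a)*(1-(m:ℝ)*a)⁻¹) (m:ℝ) (-(j:ℝ))
      (1/(m:ℝ)-a) ((m:ℝ)*a + (j:ℝ)*(1/(m:ℝ)-a))) volume volume := by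
  have hm0' := hm0 hm
  have ha0 := ha.1
  have hden : (0:ℝ) < 1 - (m:ℝ)*a := by nlinarith [hma1 hm ha]
  exact measurePreserving_aff3 _ _ _ _ _ _ (by positivity) (by positivity) (hb0 ha)
    (by field_simp <;> ring)

-- ### assembling the measure computation

lemma box_meas (s t u : Set ℝ) (hs : MeasurableSet s) (ht : MeasurableSet t)
    (hu : MeasurableSet u) : MeasurableSet (s ×ˢ t ×ˢ u) := hs.prod (ht.prod hu)

lemma gmap_map_restrict {m : ℕ} {a : ℝ} (hm : 2 ≤ m) (ha : a ∈ Ioo (0:ℝ) (1/m)) :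
    Measure.map (gmap m a) (volume.restrict cubeIco) = volume.restrict cubeIco := by
  have hgm : Measurable (gmap m a) := measurable_hbaker3 m a _
  have hm0' := hm0 hm
  have ha0 := ha.1
  have hb0' := hb0 ha
  have hPaM : ∀ i : ℕ, MeasurableSet (Pa a i) := fun i =>
    box_meas _ _ _ measurableSet_Ico measurableSet_Ico measurableSet_Ico
  have hPbM : ∀ j : ℕ, MeasurableSet (Pb m a j) := fun j =>
    box_meas _ _ _ measurableSet_Ico measurableSet_Ico measurableSet_Ico
  have hQaM : ∀ i : ℕ, MeasurableSet (Qa m a i) := fun i =>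
    box_meas _ _ _ measurableSet_Ico measurableSet_Ico measurableSet_Ico
  have hQbM : ∀ j : ℕ, MeasurableSet (Qb m a j) := fun j =>
    box_meas _ _ _ measurableSet_Ico measurableSet_Ico measurableSet_Ico
  have hdisPa : ∀ {i j : ℕ}, i ≠ j → Disjoint (Pa a i) (Pa a j) := fun hij =>
    Set.disjoint_prod.mpr (Or.inl (by simpa using grid_disjoint 0 a ha0.le hij))
  have hdisPb : ∀ {i j : ℕ}, i ≠ j → Disjoint (Pb m a i) (Pb m a j) := fun hij =>
    Set.disjoint_prod.mpr (Or.inr (Set.disjoint_prod.mpr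
      (Or.inl (by simpa using grid_disjoint 0 (1/(m:ℝ)) (by positivity) hij))))
  have hdisQa : ∀ {i j : ℕ}, i ≠ j → Disjoint (Qa m a i) (Qa m a j) := fun hij =>
    Set.disjoint_prod.mpr (Or.inr (Set.disjoint_prod.mpr
      (Or.inl (by simpa using grid_disjoint 0 (1/(m:ℝ)) (by positivity) hij))))
  have hdisQb : ∀ {i j : ℕ}, i ≠ j → Disjoint (Qb m a i) (Qb m a j) := fun hij =>
    Set.disjoint_prod.mpr (Or.inr (Set.disjoint_prod.mpr
      (Or.inr (grid_disjoint ((m:ℝ)*a) (1/(m:ℝ)-a) hb0'.le hij))))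
  ext s hs
  rw [Measure.map_apply hgm hs, Measure.restrict_apply hs, Measure.restrict_apply (hgm hs)]
  have hL : gmap m a ⁻¹' s ∩ cubeIco =
      (⋃ i ∈ Finset.range m, gmap m a ⁻¹' s ∩ Pa a i) ∪
      (⋃ j ∈ Finset.range m, gmap m a ⁻¹' s ∩ Pb m a j) := by
    conv_lhs => rw [cube_union_P hm ha]
    rw [Set.inter_union_distrib_left, Set.inter_iUnion₂, Set.inter_iUnion₂]
  have hR : s ∩ cubeIco =
      (⋃ i ∈ Finset.range m, s ∩ Qa m a i) ∪
      (⋃ j ∈ Finset.range m, s ∩ Qb m a j) := by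
    conv_lhs => rw [cube_union_Q hm ha]
    rw [Set.inter_union_distrib_left, Set.inter_iUnion₂, Set.inter_iUnion₂]
  have hdisjL : Disjoint (⋃ i ∈ Finset.range m, gmap m a ⁻¹' s ∩ Pa a i)
      (⋃ j ∈ Finset.range m, gmap m a ⁻¹' s ∩ Pb m a j) := by
    refine Set.disjoint_left.mpr ?_
    intro p hp hq
    simp only [mem_iUnion, mem_inter_iff, Finset.mem_range] at hp hq
    obtain ⟨i, hi, -, hpi⟩ := hp
    obtain ⟨j, hj, -, hqj⟩ := hq
    have h1 := hpi.1.2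
    have h2 := hqj.1.1
    have hi' : ((i:ℝ)+1) ≤ (m:ℝ) := by exact_mod_cast hi
    nlinarith
  have hdisjR : Disjoint (⋃ i ∈ Finset.range m, s ∩ Qa m a i)
      (⋃ j ∈ Finset.range m, s ∩ Qb m a j) := by
    refine Set.disjoint_left.mpr ?_
    intro p hp hq
    simp only [mem_iUnion, mem_inter_iff, Finset.mem_range] at hp hq
    obtain ⟨i, hi, -, hpi⟩ := hp
    obtain ⟨j, hj, -, hqj⟩ := hq
    have h1 := hpi.2.2.2
    have h2 := hqj.2.2.1
    have hjz : (0:ℝ) ≤ (j:ℝ) := Nat.cast_nonneg j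
    nlinarith
  have hpieceA : ∀ i ∈ Finset.range m,
      volume (gmap m a ⁻¹' s ∩ Pa a i) = volume (s ∩ Qa m a i) := by
    intro i hi
    rw [Finset.mem_range] at hi
    have key : gmap m a ⁻¹' s ∩ Pa a i =
        aff3 a⁻¹ (-(i:ℝ)) (m:ℝ)⁻¹ ((i:ℝ)*(m:ℝ)⁻¹) ((m:ℝ)*a) 0 ⁻¹' (s ∩ Qa m a i) := by
      rw [Set.preimage_inter, Pa_preimage hm ha i]
      ext p
      simp only [mem_inter_iff, mem_preimage]
      constructor
      · rintro ⟨h1, h2⟩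
        exact ⟨by rw [← gmap_on_Pa hm ha hi h2]; exact h1, h2⟩
      · rintro ⟨h1, h2⟩
        exact ⟨by rw [gmap_on_Pa hm ha hi h2]; exact h1, h2⟩
    rw [key, (mp_Aa hm ha i).measure_preimage ((hs.inter (hQaM i)).nullMeasurableSet)]
  have hpieceB : ∀ j ∈ Finset.range m,
      volume (gmap m a ⁻¹' s ∩ Pb m a j) = volume (s ∩ Qb m a j) := by
    intro j hj
    rw [Finset.mem_range] at hj
    have key : gmap m a ⁻¹' s ∩ Pb m a j =
        aff3 (1-(m:ℝ)*a)⁻¹ (-((m:ℝ)*a)*(1-(m:ℝ)*a)⁻¹) (m:ℝ) (-(j:ℝ))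
          (1/(m:ℝ)-a) ((m:ℝ)*a + (j:ℝ)*(1/(m:ℝ)-a)) ⁻¹' (s ∩ Qb m a j) := by
      rw [Set.preimage_inter, Pb_preimage hm ha j]
      ext p
      simp only [mem_inter_iff, mem_preimage]
      constructor
      · rintro ⟨h1, h2⟩
        exact ⟨by rw [← gmap_on_Pb hm ha hj h2]; exact h1, h2⟩
      · rintro ⟨h1, h2⟩
        exact ⟨by rw [gmap_on_Pb hm ha hj h2]; exact h1, h2⟩
    rw [key, (mp_Ab hm ha j).measure_preimage ((hs.inter (hQbM j)).nullMeasurableSet)]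
  rw [hL, hR,
    measure_union hdisjL (Finset.measurableSet_biUnion _ fun j _ => (hgm hs).inter (hPbM j)),
    measure_union hdisjR (Finset.measurableSet_biUnion _ fun j _ => hs.inter (hQbM j)),
    measure_biUnion_finset (fun i _ j _ hij => (hdisPa hij).mono inter_subset_right
      inter_subset_right) (fun i _ => (hgm hs).inter (hPaM i)),
    measure_biUnion_finset (fun i _ j _ hij => (hdisPb hij).mono inter_subset_right
      inter_subset_right) (fun j _ => (hgm hs).inter (hPbM j)),
    measure_biUnion_finset (fun i _ j _ hij => (hdisQa hij).mono inter_subset_right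
      inter_subset_right) (fun i _ => hs.inter (hQaM i)),
    measure_biUnion_finset (fun i _ j _ hij => (hdisQb hij).mono inter_subset_right
      inter_subset_right) (fun j _ => hs.inter (hQbM j)),
    Finset.sum_congr rfl hpieceA, Finset.sum_congr rfl hpieceB]

-- ### Leb3 and the cube

lemma cubeIco_subset : cubeIco ⊆ unitCube := by
  rintro ⟨x, y, z⟩ ⟨hx, hy, hz⟩
  exact ⟨⟨hx.1, hx.2.le⟩, ⟨hy.1, hy.2.le⟩, hz.1, hz.2.le⟩

lemma cube_diff_null : volume (unitCube \ cubeIco) = 0 := by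
  have hsub : unitCube \ cubeIco ⊆
      ({(1:ℝ)} ×ˢ (univ : Set (ℝ × ℝ))) ∪
      ((univ : Set ℝ) ×ˢ {(1:ℝ)} ×ˢ (univ : Set ℝ)) ∪
      ((univ : Set ℝ) ×ˢ (univ : Set ℝ) ×ˢ {(1:ℝ)}) := by
    rintro ⟨x, y, z⟩ ⟨hin, hout⟩
    obtain ⟨⟨hx0, hx1⟩, ⟨hy0, hy1⟩, hz0, hz1⟩ := hin
    rcases eq_or_lt_of_le hx1 with h1 | h1
    · exact Or.inl (Or.inl ⟨mem_singleton_iff.mpr h1, trivial⟩)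
    rcases eq_or_lt_of_le hy1 with h2 | h2
    · exact Or.inl (Or.inr ⟨trivial, mem_singleton_iff.mpr h2, trivial⟩)
    rcases eq_or_lt_of_le hz1 with h3 | h3
    · exact Or.inr ⟨trivial, trivial, mem_singleton_iff.mpr h3⟩
    exact absurd ⟨⟨hx0, h1⟩, ⟨hy0, h2⟩, hz0, h3⟩ hout
  refine measure_mono_null hsub ?_
  refine measure_union_null (measure_union_null ?_ ?_) ?_
  · exact null_slice1 _ Real.volume_singleton
  · exact null_slice2 _ Real.volume_singleton
  · exact null_slice3 _ Real.volume_singleton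

lemma leb3_eq_cubeIco : Leb3 = volume.restrict cubeIco := by
  rw [Leb3]
  refine Measure.restrict_congr_set ?_
  rw [MeasureTheory.ae_eq_set]
  constructor
  · exact cube_diff_null
  · rw [Set.diff_eq_empty.mpr cubeIco_subset]
    exact measure_empty

theorem gmap_measurePreserving {m : ℕ} {a : ℝ} (hm : 2 ≤ m) (ha : a ∈ Ioo (0:ℝ) (1/m)) :
    MeasurePreserving (gmap m a) Leb3 Leb3 :=
  ⟨measurable_hbaker3 m a _, by rw [leb3_eq_cubeIco]; exact gmap_map_restrict hm ha⟩

-- ### the involution ι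

lemma iota_involutive (p : ℝ × ℝ × ℝ) : iotaMap (iotaMap p) = p := by
  simp [iotaMap]

lemma iota_measurable : Measurable iotaMap := by
  unfold iotaMap; fun_prop

def iotaEquiv : (ℝ × ℝ × ℝ) ≃ᵐ (ℝ × ℝ × ℝ) :=
  ⟨⟨iotaMap, iotaMap, iota_involutive, iota_involutive⟩, iota_measurable, iota_measurable⟩

lemma map_iota_volume : Measure.map iotaMap volume = volume := by
  have h1 : MeasurePreserving (fun x : ℝ => 1 - x) volume volume := by
    have he : (fun x : ℝ => 1 - x) = (fun x : ℝ => 1 + x) ∘ (fun x : ℝ => -x) := by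
      funext x; simp [Function.comp, sub_eq_add_neg]
    rw [he]
    exact (measurePreserving_add_left volume 1).comp (Measure.measurePreserving_neg volume)
  have hneg3 : MeasurePreserving
      (Prod.map (fun x : ℝ => 1 - x) (Prod.map (fun x : ℝ => 1 - x) (fun x : ℝ => 1 - x)))
      volume volume := by
    rw [Measure.volume_eq_prod, Measure.volume_eq_prod ℝ ℝ]
    exact h1.prod (h1.prod h1)
  have hswap1 : MeasurePreserving (Prod.swap : ℝ × (ℝ × ℝ) → (ℝ × ℝ) × ℝ) volume volume := by
    rw [Measure.volume_eq_prod, Measure.volume_eq_prod]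
    exact Measure.measurePreserving_swap
  have hswap2 : MeasurePreserving (Prod.map (Prod.swap : ℝ × ℝ → ℝ × ℝ) (id : ℝ → ℝ))
      (volume : Measure ((ℝ × ℝ) × ℝ)) volume := by
    rw [Measure.volume_eq_prod]
    refine MeasurePreserving.prod ?_ (MeasurePreserving.id _)
    rw [Measure.volume_eq_prod]
    exact Measure.measurePreserving_swap
  have hassoc : MeasurePreserving
      (MeasurableEquiv.prodAssoc : (ℝ × ℝ) × ℝ ≃ᵐ ℝ × ℝ × ℝ) volume volume := by
    rw [Measure.volume_eq_prod, Measure.volume_eq_prod, Measure.volume_eq_prod,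
      Measure.volume_eq_prod]
    exact measurePreserving_prodAssoc volume volume volume
  have hfact : iotaMap =
      (Prod.map (fun x : ℝ => 1 - x) (Prod.map (fun x : ℝ => 1 - x) (fun x : ℝ => 1 - x))) ∘
      ((MeasurableEquiv.prodAssoc : (ℝ × ℝ) × ℝ ≃ᵐ ℝ × ℝ × ℝ) ∘
        ((Prod.map (Prod.swap : ℝ × ℝ → ℝ × ℝ) (id : ℝ → ℝ)) ∘
          (Prod.swap : ℝ × (ℝ × ℝ) → (ℝ × ℝ) × ℝ))) := by
    funext p
    rfl
  rw [hfact]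
  exact (hneg3.comp (hassoc.comp (hswap2.comp hswap1))).map_eq

lemma unitCube_meas : MeasurableSet unitCube :=
  measurableSet_Icc.prod (measurableSet_Icc.prod measurableSet_Icc)

lemma iota_preimage_cube : iotaMap ⁻¹' unitCube = unitCube := by
  ext ⟨x, y, z⟩
  simp only [mem_preimage, iotaMap, unitCube, Set.mem_prod, mem_Icc]
  constructor
  · rintro ⟨⟨h1, h2⟩, ⟨h3, h4⟩, h5, h6⟩
    refine ⟨⟨?_, ?_⟩, ⟨?_, ?_⟩, ?_, ?_⟩ <;> linarith
  · rintro ⟨⟨h1, h2⟩, ⟨h3, h4⟩, h5, h6⟩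
    refine ⟨⟨?_, ?_⟩, ⟨?_, ?_⟩, ?_, ?_⟩ <;> linarith

lemma iota_measurePreserving : MeasurePreserving iotaMap Leb3 Leb3 := by
  refine ⟨iota_measurable, ?_⟩
  rw [Leb3]
  conv_lhs => rw [← iota_preimage_cube]
  rw [← Measure.restrict_map iota_measurable unitCube_meas, map_iota_volume]

-- ### the good set and the conjugacy

def goodSet (m : ℕ) (a : ℝ) : Set (ℝ × ℝ × ℝ) :=
  ((⋃ i ∈ Finset.range m, Ioo ((i:ℝ)*a) (((i:ℝ)+1)*a)) ∪ Ioo ((m:ℝ)*a) 1) ×ˢ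
  (⋃ j ∈ Finset.range m, Ioo ((j:ℝ)*(1/(m:ℝ))) (((j:ℝ)+1)*(1/(m:ℝ)))) ×ˢ Ioo (0:ℝ) 1

lemma goodSet_meas (m : ℕ) (a : ℝ) : MeasurableSet (goodSet m a) :=
  box_meas _ _ _
    ((Finset.measurableSet_biUnion _ fun _ _ => measurableSet_Ioo).union measurableSet_Ioo)
    (Finset.measurableSet_biUnion _ fun _ _ => measurableSet_Ioo) measurableSet_Ioo

set_option maxHeartbeats 1000000 in
lemma conj_step {m : ℕ} {a : ℝ} (hm : 2 ≤ m) (ha : a ∈ Ioo (0:ℝ) (1/m))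
    {p : ℝ × ℝ × ℝ} (hp : p ∈ goodSet m a) :
    gmap m (1/(m:ℝ) - a) (iotaMap (gmap m a p)) = iotaMap p := by
  have hm0' := hm0 hm
  have ha0 := ha.1
  have hb0' := hb0 ha
  have hma : (m:ℝ)*a < 1 := hma1 hm ha
  have ha' : (1/(m:ℝ) - a) ∈ Ioo (0:ℝ) (1/(m:ℝ)) := ⟨hb0', by linarith⟩
  obtain ⟨hx, hy, hz⟩ := hp
  simp only [mem_iUnion, Finset.mem_range] at hy
  obtain ⟨j, hj, hy1, hy2⟩ := hy
  have hj' : ((j:ℝ)+1) ≤ (m:ℝ) := by exact_mod_cast hj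
  have hy0 : 0 < p.2.1 := lt_of_le_of_lt (by positivity) hy1
  have hylt : p.2.1 < 1 := by
    have : ((j:ℝ)+1)*(1/(m:ℝ)) ≤ 1 := by
      rw [mul_one_div, div_le_one hm0']; exact hj'
    linarith
  have hz0 := hz.1
  have hz1 := hz.2
  rcases hx with hxa | hxb
  · -- α case : x in some Ioo (i*a) ((i+1)*a)
    simp only [mem_iUnion, Finset.mem_range] at hxa
    obtain ⟨i, hi, hx1, hx2⟩ := hxa
    have hi' : ((i:ℝ)+1) ≤ (m:ℝ) := by exact_mod_cast hi
    have hpPa : p ∈ Pa a i := ⟨⟨hx1.le, hx2⟩, ⟨hy0.le.trans' (by positivity), hylt⟩, hz0.le, hz1⟩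
    rw [gmap_on_Pa hm ha hi hpPa]
    -- the image point lies in Pb m (1/m - a) (m - (i+1))
    have hcast : ((m - (i+1) : ℕ) : ℝ) = (m:ℝ) - ((i:ℝ)+1) := by
      rw [Nat.cast_sub (by omega)]; push_cast; ring
    have haMi : a⁻¹ * a = 1 := inv_mul_cancel₀ ha0.ne'
    have hMi : (m:ℝ)⁻¹ * (m:ℝ) = 1 := inv_mul_cancel₀ hm0'.ne'
    have hmemb : iotaMap (aff3 a⁻¹ (-(i:ℝ)) (m:ℝ)⁻¹ ((i:ℝ)*(m:ℝ)⁻¹) ((m:ℝ)*a) 0 p) ∈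
        Pb m (1/(m:ℝ) - a) (m - (i+1)) := by
      refine ⟨⟨?_, ?_⟩, ⟨?_, ?_⟩, ?_, ?_⟩
      · show (m:ℝ)*(1/(m:ℝ) - a) ≤ 1 - ((m:ℝ)*a*p.2.2 + 0)
        have e2 : (m:ℝ)*(1/(m:ℝ) - a) = 1 - (m:ℝ)*a := by field_simp
        nlinarith [mul_nonneg (mul_pos hm0' ha0).le (sub_nonneg.mpr hz1.le)]
      · show 1 - ((m:ℝ)*a*p.2.2 + 0) < 1
        nlinarith [mul_pos (mul_pos hm0' ha0) hz0]
      · show ((m - (i+1) : ℕ) : ℝ)*(1/(m:ℝ)) ≤ 1 - ((m:ℝ)⁻¹*p.2.1 + (i:ℝ)*(m:ℝ)⁻¹)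
        rw [hcast, one_div]
        nlinarith [hMi, mul_nonneg (inv_nonneg.mpr hm0'.le) (sub_nonneg.mpr hylt.le)]
      · show 1 - ((m:ℝ)⁻¹*p.2.1 + (i:ℝ)*(m:ℝ)⁻¹) < (((m - (i+1) : ℕ) : ℝ)+1)*(1/(m:ℝ))
        rw [hcast, one_div]
        nlinarith [hMi, mul_pos (inv_pos.mpr hm0') hy0]
      · show 0 ≤ 1 - (a⁻¹*p.1 + -(i:ℝ))
        nlinarith [mul_nonneg (inv_nonneg.mpr ha0.le) (sub_nonneg.mpr hx2.le), haMi]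
      · show 1 - (a⁻¹*p.1 + -(i:ℝ)) < 1
        nlinarith [mul_pos (inv_pos.mpr ha0) (sub_pos.mpr hx1), haMi]
    rw [gmap_on_Pb hm ha' (by omega : m - (i+1) < m) hmemb,
      show (1:ℝ)/(m:ℝ) - (1/(m:ℝ) - a) = a from by ring,
      show (1:ℝ) - (m:ℝ)*(1/(m:ℝ) - a) = (m:ℝ)*a from by field_simp; ring]
    unfold aff3 iotaMap
    simp only [Prod.mk.injEq]
    rw [hcast]
    have hden : ((1:ℝ) - (m:ℝ)*(1/(m:ℝ) - a)) ≠ 0 := by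
      have : (m:ℝ)*(1/(m:ℝ) - a) = 1 - (m:ℝ)*a := by field_simp
      rw [this]; intro hcon; nlinarith
    refine ⟨?_, ?_, ?_⟩
    · field_simp
      ring
    · field_simp
      ring
    · field_simp
      ring
  · -- β case : x in Ioo (m*a) 1
    have hpPb : p ∈ Pb m a j := ⟨⟨hxb.1.le, hxb.2⟩, ⟨hy1.le, hy2⟩, hz0.le, hz1⟩
    rw [gmap_on_Pb hm ha hj hpPb]
    have hcast : ((m - (j+1) : ℕ) : ℝ) = (m:ℝ) - ((j:ℝ)+1) := by
      rw [Nat.cast_sub (by omega)]; push_cast; ring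
    have hden0 : (0:ℝ) < 1 - (m:ℝ)*a := by linarith
    have hdMi : (1 - (m:ℝ)*a)⁻¹ * (1 - (m:ℝ)*a) = 1 := inv_mul_cancel₀ hden0.ne'
    have hjm : (j:ℝ) < (m:ℝ)*p.2.1 := by
      calc (j:ℝ) = ((j:ℝ)*(1/(m:ℝ)))*(m:ℝ) := by field_simp
        _ < p.2.1*(m:ℝ) := mul_lt_mul_of_pos_right hy1 hm0'
        _ = (m:ℝ)*p.2.1 := mul_comm _ _
    have hjm2 : (m:ℝ)*p.2.1 < (j:ℝ)+1 := by
      calc (m:ℝ)*p.2.1 = p.2.1*(m:ℝ) := mul_comm _ _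
        _ < (((j:ℝ)+1)*(1/(m:ℝ)))*(m:ℝ) := mul_lt_mul_of_pos_right hy2 hm0'
        _ = (j:ℝ)+1 := by field_simp
    have hmema : iotaMap (aff3 (1-(m:ℝ)*a)⁻¹ (-((m:ℝ)*a)*(1-(m:ℝ)*a)⁻¹) (m:ℝ) (-(j:ℝ))
        (1/(m:ℝ)-a) ((m:ℝ)*a + (j:ℝ)*(1/(m:ℝ)-a)) p) ∈ Pa (1/(m:ℝ) - a) (m - (j+1)) := by
      refine ⟨⟨?_, ?_⟩, ⟨?_, ?_⟩, ?_, ?_⟩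
      · show ((m - (j+1) : ℕ) : ℝ)*(1/(m:ℝ) - a) ≤
          1 - ((1/(m:ℝ)-a)*p.2.2 + ((m:ℝ)*a + (j:ℝ)*(1/(m:ℝ)-a)))
        rw [hcast]
        have e2 : (m:ℝ)*(1/(m:ℝ) - a) = 1 - (m:ℝ)*a := by field_simp
        nlinarith [mul_nonneg hb0'.le (sub_nonneg.mpr hz1.le)]
      · show 1 - ((1/(m:ℝ)-a)*p.2.2 + ((m:ℝ)*a + (j:ℝ)*(1/(m:ℝ)-a))) <
          (((m - (j+1) : ℕ) : ℝ)+1)*(1/(m:ℝ) - a)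
        rw [hcast]
        have e2 : (m:ℝ)*(1/(m:ℝ) - a) = 1 - (m:ℝ)*a := by field_simp
        nlinarith [mul_pos hb0' hz0]
      · show 0 ≤ 1 - ((m:ℝ)*p.2.1 + -(j:ℝ))
        linarith
      · show 1 - ((m:ℝ)*p.2.1 + -(j:ℝ)) < 1
        linarith
      · show 0 ≤ 1 - ((1-(m:ℝ)*a)⁻¹*p.1 + -((m:ℝ)*a)*(1-(m:ℝ)*a)⁻¹)
        nlinarith [mul_nonneg (inv_nonneg.mpr hden0.le) (sub_nonneg.mpr hxb.2.le), hdMi]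
      · show 1 - ((1-(m:ℝ)*a)⁻¹*p.1 + -((m:ℝ)*a)*(1-(m:ℝ)*a)⁻¹) < 1
        nlinarith [mul_pos (inv_pos.mpr hden0) (sub_pos.mpr hxb.1), hdMi]
    rw [gmap_on_Pa hm ha' (by omega : m - (j+1) < m) hmema]
    unfold aff3 iotaMap
    simp only [Prod.mk.injEq]
    rw [hcast]
    refine ⟨?_, ?_, ?_⟩
    · field_simp
      ring
    · field_simp
      ring
    · field_simp
      ring

-- ### iteration of the conjugacy and the full-measure orbit set

lemma conj_iter {m : ℕ} {a : ℝ} (hm : 2 ≤ m) (ha : a ∈ Ioo (0:ℝ) (1/m))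
    {p : ℝ × ℝ × ℝ} (hp : ∀ t : ℕ, (gmap m a)^[t] p ∈ goodSet m a) :
    ∀ s : ℕ, (gmap m (1/(m:ℝ) - a))^[s] (iotaMap ((gmap m a)^[s] p)) = iotaMap p := by
  intro s
  induction s with
  | zero => simp
  | succ s ih =>
    rw [Function.iterate_succ_apply' (gmap m a) s p,
      Function.iterate_succ_apply (gmap m (1/(m:ℝ) - a)) s,
      conj_step hm ha (hp s), ih]

lemma goodSet_compl_null {m : ℕ} {a : ℝ} (hm : 2 ≤ m) (ha : a ∈ Ioo (0:ℝ) (1/m)) :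
    Leb3 (goodSet m a)ᶜ = 0 := by
  have hm0' := hm0 hm
  have ha0 := ha.1
  have hma := hma1 hm ha
  rw [Leb3, Measure.restrict_apply (goodSet_meas m a).compl, inter_comm, ← Set.diff_eq]
  set Xbad : Set ℝ := (⋃ i ∈ Finset.range (m+1), {(i:ℝ)*a}) ∪ {(1:ℝ)} with hXbad
  set Ybad : Set ℝ := (⋃ j ∈ Finset.range (m+1), {(j:ℝ)*(1/(m:ℝ))}) ∪ {(1:ℝ)} with hYbad
  set Zbad : Set ℝ := {(0:ℝ), 1} with hZbad
  have claimX : ∀ x : ℝ, x ∈ Icc (0:ℝ) 1 →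
      x ∉ ((⋃ i ∈ Finset.range m, Ioo ((i:ℝ)*a) (((i:ℝ)+1)*a)) ∪ Ioo ((m:ℝ)*a) 1) →
      x ∈ Xbad := by
    intro x hx hnot
    rcases eq_or_lt_of_le hx.2 with h1 | h1
    · exact Or.inr (mem_singleton_iff.mpr h1)
    rcases lt_or_ge x ((m:ℝ)*a) with h2 | h2
    · have hmem : x ∈ Ico (0:ℝ) (0 + (m:ℝ)*a) := by
        rw [zero_add]; exact ⟨hx.1, h2⟩
      rcases grid_bad 0 a m hmem with h3 | h3
      · exfalso
        apply hnot
        left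
        simp only [zero_add] at h3
        exact h3
      · left
        simp only [mem_iUnion, Finset.mem_range, mem_singleton_iff, zero_add] at h3 ⊢
        exact h3
    rcases eq_or_lt_of_le h2 with h3 | h3
    · refine Or.inl ?_
      simp only [mem_iUnion, Finset.mem_range, mem_singleton_iff]
      exact ⟨m, by omega, by rw [← h3]⟩
    · exact absurd (Or.inr ⟨h3, h1⟩) hnot
  have claimY : ∀ y : ℝ, y ∈ Icc (0:ℝ) 1 →
      y ∉ (⋃ j ∈ Finset.range m, Ioo ((j:ℝ)*(1/(m:ℝ))) (((j:ℝ)+1)*(1/(m:ℝ)))) →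
      y ∈ Ybad := by
    intro y hy hnot
    rcases eq_or_lt_of_le hy.2 with h1 | h1
    · exact Or.inr (mem_singleton_iff.mpr h1)
    have hmem : y ∈ Ico (0:ℝ) (0 + (m:ℝ)*(1/(m:ℝ))) := by
      rw [zero_add, mul_one_div, div_self hm0'.ne']
      exact ⟨hy.1, h1⟩
    rcases grid_bad 0 (1/(m:ℝ)) m hmem with h3 | h3
    · exfalso
      apply hnot
      simp only [zero_add] at h3
      exact h3
    · left
      simp only [mem_iUnion, Finset.mem_range, mem_singleton_iff, zero_add] at h3 ⊢
      exact h3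
  have hsub : unitCube \ goodSet m a ⊆
      (Xbad ×ˢ (univ : Set (ℝ × ℝ))) ∪
      ((univ : Set ℝ) ×ˢ Ybad ×ˢ (univ : Set ℝ)) ∪
      ((univ : Set ℝ) ×ˢ (univ : Set ℝ) ×ˢ Zbad) := by
    rintro ⟨x, y, z⟩ ⟨hin, hout⟩
    obtain ⟨hx, hy, hz⟩ := hin
    by_cases hX : x ∈ ((⋃ i ∈ Finset.range m, Ioo ((i:ℝ)*a) (((i:ℝ)+1)*a)) ∪ Ioo ((m:ℝ)*a) 1)
    · by_cases hY : y ∈ (⋃ j ∈ Finset.range m, Ioo ((j:ℝ)*(1/(m:ℝ))) (((j:ℝ)+1)*(1/(m:ℝ))))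
      · by_cases hZ : z ∈ Ioo (0:ℝ) 1
        · exact absurd ⟨hX, hY, hZ⟩ hout
        · refine Or.inr ⟨trivial, trivial, ?_⟩
          rcases eq_or_lt_of_le hz.1 with h1 | h1
          · exact Or.inl h1.symm
          rcases eq_or_lt_of_le hz.2 with h2 | h2
          · exact Or.inr h2
          · exact absurd ⟨h1, h2⟩ hZ
      · exact Or.inl (Or.inr ⟨trivial, claimY y hy hY, trivial⟩)
    · exact Or.inl (Or.inl ⟨claimX x hx hX, trivial⟩)
  refine measure_mono_null hsub ?_
  have hXfin : Xbad.Finite :=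
    (Set.Finite.biUnion (Finset.range (m+1)).finite_toSet fun _ _ => finite_singleton _).union
      (finite_singleton _)
  have hYfin : Ybad.Finite :=
    (Set.Finite.biUnion (Finset.range (m+1)).finite_toSet fun _ _ => finite_singleton _).union
      (finite_singleton _)
  have hZfin : Zbad.Finite := (finite_singleton _).insert _
  refine measure_union_null (measure_union_null ?_ ?_) ?_
  · exact null_slice1 _ (hXfin.measure_zero volume)
  · exact null_slice2 _ (hYfin.measure_zero volume)
  · exact null_slice3 _ (hZfin.measure_zero volume)

-- MAIN
/-- **Invariance of correlations (Proposition 3.1).** For `m ≥ 2`, `a ∈ (0,1/m)`,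
`k ≥ 2`, `φ_0,…,φ_{k-1} ∈ L^k(Leb)` and `0 = n_0 ≤ n_1 ≤ ⋯ ≤ n_{k-1}`:
`Cor_{n_1,…,n_{k-1}}(g_a; φ_0,…,φ_{k-1}; Leb)`
`= Cor(g_{1/m-a}; φ_0∘ι⁻¹,…,φ_{k-1}∘ι⁻¹; Leb)` with time shifts `n_{k-1} - n_j`
(here `ι⁻¹ = ι` since `ι` is an involution). -/
theorem heterochaos_baker_correlation_invariance
    (m : ℕ) (hm : 2 ≤ m) (a : ℝ) (ha : a ∈ Ioo (0 : ℝ) (1 / m))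
    (k : ℕ) (hk : 2 ≤ k) (φ : Fin k → (ℝ × ℝ × ℝ → ℝ))
    (hφ : ∀ j, MemLp (φ j) (k : ℝ≥0∞) Leb3)
    (n : Fin k → ℕ) (hmono : Monotone n) (h0 : n ⟨0, by omega⟩ = 0) :
    |(∫ p, ∏ j, φ j ((gmap m a)^[n j] p) ∂Leb3) - ∏ j, ∫ p, φ j p ∂Leb3| =
      |(∫ p, ∏ j, (φ j ∘ iotaMap) ((gmap m (1 / m - a))^[n ⟨k - 1, by omega⟩ - n j] p) ∂Leb3) -
        ∏ j, ∫ p, (φ j ∘ iotaMap) p ∂Leb3| := by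
  have hm0' := hm0 hm
  have ha' : (1/(m:ℝ) - a) ∈ Ioo (0:ℝ) (1/(m:ℝ)) := ⟨hb0 ha, by linarith [ha.1]⟩
  have hMP : MeasurePreserving (gmap m a) Leb3 Leb3 := gmap_measurePreserving hm ha
  have hMP' : MeasurePreserving (gmap m (1/(m:ℝ) - a)) Leb3 Leb3 := gmap_measurePreserving hm ha'
  have hι := iota_measurePreserving
  have hae : ∀ᵐ p ∂Leb3, ∀ t : ℕ, (gmap m a)^[t] p ∈ goodSet m a := by
    rw [MeasureTheory.ae_all_iff]
    intro t
    have h0 : Leb3 (((gmap m a)^[t]) ⁻¹' (goodSet m a)ᶜ) = 0 := by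
      rw [(hMP.iterate t).measure_preimage (goodSet_meas m a).compl.nullMeasurableSet]
      exact goodSet_compl_null hm ha
    rw [ae_iff]
    exact h0
  have hptwise : ∀ᵐ p ∂Leb3,
      (∏ j, φ j ((gmap m a)^[n j] p)) =
      (fun q => ∏ j, (φ j ∘ iotaMap)
          ((gmap m (1/(m:ℝ) - a))^[n ⟨k - 1, by omega⟩ - n j] q))
        (iotaMap ((gmap m a)^[n ⟨k - 1, by omega⟩] p)) := by
    filter_upwards [hae] with p hp
    refine Finset.prod_congr rfl fun j _ => ?_
    have hjN : n j ≤ n ⟨k - 1, by omega⟩ := by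
      apply hmono
      rw [Fin.le_def]
      show (j : ℕ) ≤ k - 1
      have := j.isLt
      omega
    have hsplit : (gmap m a)^[n ⟨k - 1, by omega⟩] p =
        (gmap m a)^[n ⟨k - 1, by omega⟩ - n j] ((gmap m a)^[n j] p) := by
      rw [← Function.iterate_add_apply, Nat.sub_add_cancel hjN]
    have hporbit : ∀ t : ℕ, (gmap m a)^[t] ((gmap m a)^[n j] p) ∈ goodSet m a := by
      intro t
      rw [← Function.iterate_add_apply]
      exact hp _
    have hconj := conj_iter hm ha hporbit (n ⟨k - 1, by omega⟩ - n j)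
    simp only [hsplit, hconj]
    simp [Function.comp, iota_involutive]
  have hT : MeasurePreserving (fun p => iotaMap ((gmap m a)^[n ⟨k - 1, by omega⟩] p))
      Leb3 Leb3 := hι.comp (hMP.iterate _)
  have hFm : AEStronglyMeasurable
      (fun q => ∏ j, (φ j ∘ iotaMap)
        ((gmap m (1/(m:ℝ) - a))^[n ⟨k - 1, by omega⟩ - n j] q)) Leb3 := by
    refine Finset.aestronglyMeasurable_fun_prod _ fun j _ => ?_
    have h1 : AEStronglyMeasurable (φ j) Leb3 := (hφ j).aestronglyMeasurable
    have h2 : Measure.QuasiMeasurePreserving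
        (fun q => iotaMap ((gmap m (1/(m:ℝ) - a))^[n ⟨k - 1, by omega⟩ - n j] q)) Leb3 Leb3 :=
      (hι.comp (hMP'.iterate _)).quasiMeasurePreserving
    exact h1.comp_quasiMeasurePreserving h2
  have hswap : ∫ q, (fun q => ∏ j, (φ j ∘ iotaMap)
        ((gmap m (1/(m:ℝ) - a))^[n ⟨k - 1, by omega⟩ - n j] q)) q ∂Leb3
      = ∫ p, (fun q => ∏ j, (φ j ∘ iotaMap)
        ((gmap m (1/(m:ℝ) - a))^[n ⟨k - 1, by omega⟩ - n j] q))
          (iotaMap ((gmap m a)^[n ⟨k - 1, by omega⟩] p)) ∂Leb3 := by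
    conv_lhs => rw [← hT.map_eq]
    exact MeasureTheory.integral_map hT.aemeasurable (hT.map_eq.symm ▸ hFm)
  have hint1 : ∫ p, ∏ j, φ j ((gmap m a)^[n j] p) ∂Leb3
      = ∫ q, ∏ j, (φ j ∘ iotaMap)
          ((gmap m (1/(m:ℝ) - a))^[n ⟨k - 1, by omega⟩ - n j] q) ∂Leb3 :=
    (integral_congr_ae hptwise).trans hswap.symm
  have hsingle : ∀ j, ∫ p, (φ j ∘ iotaMap) p ∂Leb3 = ∫ p, φ j p ∂Leb3 := fun j =>
    hι.integral_comp iotaEquiv.measurableEmbedding (φ j)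
  have hprod : (∏ j, ∫ p, (φ j ∘ iotaMap) p ∂Leb3) = ∏ j, ∫ p, φ j p ∂Leb3 :=
    Finset.prod_congr rfl fun j _ => hsingle j
  rw [hint1, ← hprod]
end
end

section
/- Let m ≥ 2 be an integer and a = 1/(2m). Define Q : [0,1]² ∖ E → ℤ₊ ∪ {∞} by Q(p) = inf{n ≥ 1 : S_nφᶜ(p) = −log m and f_a^n(p) ∈ Ω⁺_β} for p ∈ Ω⁺_α, and Q(p) = inf{n ≥ 1 : S_nφᶜ(p) = 0 and f_a^n(p) ∈ Ω⁺_β} for p ∈ Ω⁺_β ∖ E. Then Q(p) < ∞ for Lebesgue-almost every p ∈ [0,1]² ∖ E. -/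
open MeasureTheory Set

set_option maxHeartbeats 1000000

noncomputable section

/-- The unit square `[0,1]²`. -/
def unitSq : Set (ℝ × ℝ) := Icc 0 1 ×ˢ Icc 0 1

/-- Lebesgue measure on `[0,1]²`. -/
def Leb2 : Measure (ℝ × ℝ) := volume.restrict unitSq


/-- `Ω⁺_α = ⋃_{i=1}^m Ω⁺_{α_i} = [0, ma) × [0,1]`. -/
def OmegaAlpha (m : ℕ) (a : ℝ) : Set (ℝ × ℝ) := Ico 0 (m * a) ×ˢ Icc 0 1

/-- `Ω⁺_β = ⋃_{i=1}^m Ω⁺_{β_i} = [ma, 1] × [0,1]`. -/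
def OmegaBeta (m : ℕ) (a : ℝ) : Set (ℝ × ℝ) := Icc (m * a) 1 ×ˢ Icc 0 1

/-- The central Jacobian `φᶜ`: `-log m` on `Ω⁺_α`, `log m` on `Ω⁺_β`. -/
def phiC (m : ℕ) (a : ℝ) (p : ℝ × ℝ) : ℝ :=
  if p.1 < m * a then -Real.log m else Real.log m

/-- The Birkhoff sum `S_n φᶜ = ∑_{k=0}^{n-1} φᶜ ∘ f_a^k` (with `S_0 φᶜ ≡ 0`). -/
def birk (m : ℕ) (a : ℝ) (n : ℕ) (p : ℝ × ℝ) : ℝ :=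
  ∑ k ∈ Finset.range n, phiC m a ((hbaker m a)^[k] p)

/-- `E = Ω⁺_β ∩ f_a⁻¹(Ω⁺_β)`. -/
def Eset (m : ℕ) (a : ℝ) : Set (ℝ × ℝ) :=
  OmegaBeta m a ∩ (hbaker m a) ⁻¹' OmegaBeta m a

namespace HBproof

open scoped ENNReal NNReal

variable {m : ℕ}

lemma mR_pos (hm : 2 ≤ m) : (0:ℝ) < m := by
  have h : (0:ℕ) < m := by omega
  exact_mod_cast h

lemma hma (hm : 2 ≤ m) : (m:ℝ) * (1 / (2 * m)) = 1 / 2 := by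
  have h := (mR_pos hm).ne'
  field_simp

/-- The base map with `a = 1/(2m)`. -/
def tau (m : ℕ) (x : ℝ) : ℝ := tauMap m (1 / (2 * m)) x

lemma tau_lt (hm : 2 ≤ m) {x : ℝ} (h : x < 1 / 2) :
    tau m x = Int.fract (2 * (m:ℝ) * x) := by
  have h' : x < (m:ℝ) * (1 / (2 * m)) := by rw [hma hm]; exact h
  have hne : (m:ℝ) ≠ 0 := (mR_pos hm).ne'
  simp only [tau, tauMap, if_pos h']
  congr 1
  field_simp

lemma tau_ge (hm : 2 ≤ m) {x : ℝ} (h : ¬ x < 1 / 2) :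
    tau m x = 2 * x - 1 := by
  have h' : ¬ x < (m:ℝ) * (1 / (2 * m)) := by rw [hma hm]; exact h
  unfold tau tauMap
  rw [if_neg h', hma hm, show (1:ℝ) - 1/2 = 1/2 by norm_num,
    div_eq_iff (by norm_num : (1/2:ℝ) ≠ 0)]
  ring

lemma tau_measurable : Measurable (tau m) := by
  unfold tau tauMap
  exact Measurable.ite (measurableSet_lt measurable_id measurable_const)
    ((measurable_id.div_const _).fract)
    ((measurable_id.sub_const _).div_const _)

/-- The symbol `±1`. -/
def wI (x : ℝ) : ℤ := if x < 1/2 then -1 else 1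

lemma wI_measurable : Measurable wI :=
  Measurable.ite (measurableSet_lt measurable_id measurable_const)
    measurable_const measurable_const

lemma wI_le (x : ℝ) : wI x ≤ 1 := by unfold wI; split <;> norm_num

lemma wI_of_lt {x : ℝ} (h : x < 1/2) : wI x = -1 := if_pos h

lemma wI_of_ge {x : ℝ} (h : ¬ x < 1/2) : wI x = 1 := if_neg h

/-- The walk `T_n`. -/
def TW (m n : ℕ) (x : ℝ) : ℤ := ∑ k ∈ Finset.range n, wI ((tau m)^[k] x)

lemma TW_zero (x : ℝ) : TW m 0 x = 0 := by simp [TW]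

lemma TW_one (x : ℝ) : TW m 1 x = wI x := by simp [TW]

lemma TW_succ (n : ℕ) (x : ℝ) : TW m (n+1) x = TW m n x + wI ((tau m)^[n] x) :=
  Finset.sum_range_succ _ _

lemma TW_front (n : ℕ) (x : ℝ) : TW m (n+1) x = wI x + TW m n (tau m x) := by
  unfold TW
  rw [Finset.sum_range_succ']
  simp only [Function.iterate_succ_apply, Function.iterate_zero_apply]
  exact add_comm _ _

lemma TW_add (n j : ℕ) (x : ℝ) :
    TW m (n + j) x = TW m n x + TW m j ((tau m)^[n] x) := by
  induction j with
  | zero => simp [TW_zero]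
  | succ j ih =>
      rw [show n + (j+1) = (n+j)+1 from rfl, TW_succ, ih, TW_succ,
        Nat.add_comm n j, Function.iterate_add_apply]
      ring

/-- `V_k = {x : T_n(x) ≤ k for all n}`. -/
def Vset (m k : ℕ) : Set ℝ := {x | ∀ n, TW m n x ≤ (k:ℤ)}

lemma Vset_measurable (m k : ℕ) : MeasurableSet (Vset m k) := by
  have hTW : ∀ n, Measurable (TW m n) := fun n =>
    Finset.measurable_sum _ (fun i _ => wI_measurable.comp (tau_measurable.iterate i))
  have h : Vset m k = ⋂ n, (TW m n) ⁻¹' (Iic (k:ℤ)) := by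
    ext x; simp [Vset]
  rw [h]
  exact MeasurableSet.iInter fun n => (hTW n) measurableSet_Iic

lemma V_alpha {x : ℝ} {k : ℕ} (hx : x < 1/2) :
    x ∈ Vset m k ↔ tau m x ∈ Vset m (k+1) := by
  constructor
  · intro h n
    have h2 := h (n+1)
    rw [TW_front, wI_of_lt hx] at h2
    push_cast at h2 ⊢
    omega
  · intro h n
    cases n with
    | zero => rw [TW_zero]; positivity
    | succ n =>
        rw [TW_front, wI_of_lt hx]
        have h2 := h n
        push_cast at h2 ⊢
        omega

lemma V_beta {x : ℝ} {k : ℕ} (hx : ¬ x < 1/2) :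
    x ∈ Vset m (k+1) ↔ tau m x ∈ Vset m k := by
  constructor
  · intro h n
    have h2 := h (n+1)
    rw [TW_front, wI_of_ge hx] at h2
    push_cast at h2 ⊢
    omega
  · intro h n
    cases n with
    | zero => rw [TW_zero]; positivity
    | succ n =>
        rw [TW_front, wI_of_ge hx]
        have h2 := h n
        push_cast at h2 ⊢
        omega

lemma V0_lt_half {x : ℝ} (h : x ∈ Vset m 0) : x < 1/2 := by
  have h1 := h 1
  rw [TW_one] at h1
  by_contra hc
  rw [wI_of_ge hc] at h1
  norm_num at h1

lemma vol_affine (c d : ℝ) (hc : c ≠ 0) (s : Set ℝ) :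
    volume ((fun x => c * x + d) ⁻¹' s) = ENNReal.ofReal |c⁻¹| * volume s := by
  have h : (fun x => c * x + d) ⁻¹' s = (c * ·) ⁻¹' ((fun y => y + d) ⁻¹' s) := rfl
  rw [h, Real.volume_preimage_mul_left hc, measure_preimage_add_right]

lemma const_half (hm : 2 ≤ m) :
    (m : ℝ≥0∞) * ENNReal.ofReal |(2 * (m:ℝ))⁻¹| = ENNReal.ofReal (1/2) := by
  have hm0 : (0:ℝ) < m := mR_pos hm
  rw [abs_of_pos (by positivity), ← ENNReal.ofReal_natCast,
    ← ENNReal.ofReal_mul (by positivity)]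
  congr 1
  field_simp

lemma lemA_alpha (hm : 2 ≤ m) (A : Set ℝ) (hA : MeasurableSet A) :
    volume (Ico (0:ℝ) (1/2) ∩ tau m ⁻¹' A) = ENNReal.ofReal (1/2) * volume (A ∩ Ico 0 1) := by
  have hm0 : (0:ℝ) < m := mR_pos hm
  have hc : (2 * (m:ℝ)) ≠ 0 := by positivity
  have hkey : Ico (0:ℝ) (1/2) ∩ tau m ⁻¹' A
      = ⋃ i ∈ Finset.range m, (fun x => 2 * (m:ℝ) * x + (-(i:ℝ))) ⁻¹' (A ∩ Ico 0 1) := by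
    ext x
    simp only [mem_inter_iff, mem_Ico, mem_preimage, Finset.mem_range, mem_iUnion, exists_prop]
    constructor
    · rintro ⟨⟨hx0, hx1⟩, hxA⟩
      have hfr : tau m x = Int.fract (2 * (m:ℝ) * x) := tau_lt hm hx1
      have hfl0 : (0:ℤ) ≤ ⌊2 * (m:ℝ) * x⌋ := Int.floor_nonneg.mpr (by positivity)
      have hflm : ⌊2 * (m:ℝ) * x⌋ < (m:ℤ) := by
        apply Int.floor_lt.mpr
        push_cast
        nlinarith
      refine ⟨(⌊2 * (m:ℝ) * x⌋).toNat, by omega, ?_, ?_, ?_⟩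
      · have hcast : ((⌊2 * (m:ℝ) * x⌋).toNat : ℝ) = ((⌊2 * (m:ℝ) * x⌋ : ℤ) : ℝ) := by
          exact_mod_cast Int.toNat_of_nonneg hfl0
        rw [hcast]
        have : 2 * (m:ℝ) * x + -((⌊2 * (m:ℝ) * x⌋ : ℤ) : ℝ) = Int.fract (2 * (m:ℝ) * x) := by
          rw [Int.fract]; ring
        rw [this, ← hfr]
        exact hxA
      · have hcast : ((⌊2 * (m:ℝ) * x⌋).toNat : ℝ) = ((⌊2 * (m:ℝ) * x⌋ : ℤ) : ℝ) := by
          exact_mod_cast Int.toNat_of_nonneg hfl0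
        rw [hcast]
        have := Int.floor_le (2 * (m:ℝ) * x)
        linarith
      · have hcast : ((⌊2 * (m:ℝ) * x⌋).toNat : ℝ) = ((⌊2 * (m:ℝ) * x⌋ : ℤ) : ℝ) := by
          exact_mod_cast Int.toNat_of_nonneg hfl0
        rw [hcast]
        have := Int.lt_floor_add_one (2 * (m:ℝ) * x)
        push_cast
        linarith
    · rintro ⟨i, him, hiA, hi0, hi1⟩
      have hmi : (i:ℝ) ≤ (m:ℝ) - 1 := by
        have : (i:ℝ) + 1 ≤ (m:ℝ) := by exact_mod_cast Nat.succ_le_of_lt him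
        linarith
      have hx0 : 0 ≤ x := by nlinarith
      have hx1 : x < 1/2 := by nlinarith
      refine ⟨⟨hx0, hx1⟩, ?_⟩
      rw [tau_lt hm hx1]
      have hfl : ⌊2 * (m:ℝ) * x⌋ = (i:ℤ) := by
        apply Int.floor_eq_iff.mpr
        constructor
        · push_cast; linarith
        · push_cast; linarith
      have : Int.fract (2 * (m:ℝ) * x) = 2 * (m:ℝ) * x + -(i:ℝ) := by
        rw [Int.fract, hfl]; push_cast; ring
      rw [this]
      exact hiA
  have hd : Set.PairwiseDisjoint (↑(Finset.range m))
      (fun i : ℕ => (fun x => 2 * (m:ℝ) * x + (-(i:ℝ))) ⁻¹' (A ∩ Ico 0 1)) := by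
    intro i hi j hj hij
    simp only [Function.onFun]
    rw [Set.disjoint_left]
    rintro x hx1 hx2
    simp only [mem_preimage, mem_inter_iff, mem_Ico] at hx1 hx2
    have e1 := hx1.2.1; have e2 := hx1.2.2
    have e3 := hx2.2.1; have e4 := hx2.2.2
    apply hij
    have : ((i:ℤ):ℝ) = ((j:ℤ):ℝ) → i = j := by intro h; exact_mod_cast h
    have hij' : |(i:ℝ) - (j:ℝ)| < 1 := by rw [abs_sub_lt_iff]; constructor <;> linarith
    have : (i:ℝ) = (j:ℝ) := by
      have h1 : ((i:ℤ) - (j:ℤ) : ℝ) < 1 := by push_cast; rw [abs_sub_lt_iff] at hij'; linarith [hij'.1]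
      have h2 : ((j:ℤ) - (i:ℤ) : ℝ) < 1 := by push_cast; rw [abs_sub_lt_iff] at hij'; linarith [hij'.2]
      have h1' : (i:ℤ) - (j:ℤ) < 1 := by exact_mod_cast h1
      have h2' : (j:ℤ) - (i:ℤ) < 1 := by exact_mod_cast h2
      have : (i:ℤ) = (j:ℤ) := by omega
      exact_mod_cast this
    exact_mod_cast this
  have hm' : ∀ i ∈ Finset.range m,
      MeasurableSet ((fun x => 2 * (m:ℝ) * x + (-(i:ℝ))) ⁻¹' (A ∩ Ico 0 1)) := by
    intro i _
    have hmeas : Measurable (fun x : ℝ => 2 * (m:ℝ) * x + (-(i:ℝ))) :=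
      (measurable_id.const_mul _).add_const _
    exact hmeas (hA.inter measurableSet_Ico)
  rw [hkey, measure_biUnion_finset hd hm']
  have hterm : ∀ i ∈ Finset.range m,
      volume ((fun x => 2 * (m:ℝ) * x + (-(i:ℝ))) ⁻¹' (A ∩ Ico 0 1))
        = ENNReal.ofReal |(2 * (m:ℝ))⁻¹| * volume (A ∩ Ico 0 1) := by
    intro i _
    exact vol_affine _ _ hc _
  rw [Finset.sum_congr rfl hterm, Finset.sum_const, Finset.card_range, nsmul_eq_mul,
    ← mul_assoc, const_half hm]

lemma lemA_beta (hm : 2 ≤ m) (A : Set ℝ) :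
    volume (Icc (1/2:ℝ) 1 ∩ tau m ⁻¹' A) = ENNReal.ofReal (1/2) * volume (A ∩ Icc 0 1) := by
  have hkey : Icc (1/2:ℝ) 1 ∩ tau m ⁻¹' A
      = (fun x => 2 * x + (-1:ℝ)) ⁻¹' (A ∩ Icc 0 1) := by
    ext x
    simp only [mem_inter_iff, mem_Icc, mem_preimage]
    constructor
    · rintro ⟨⟨h1, h2⟩, hxA⟩
      have hge : ¬ x < 1/2 := not_lt.mpr h1
      rw [tau_ge hm hge] at hxA
      constructor
      · have : 2 * x + (-1:ℝ) = 2 * x - 1 := by ring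
        rw [this]; exact hxA
      · constructor <;> linarith
    · rintro ⟨hxA, h0, h1⟩
      have hx1 : 1/2 ≤ x := by linarith
      have hx2 : x ≤ 1 := by linarith
      have hge : ¬ x < 1/2 := not_lt.mpr hx1
      refine ⟨⟨hx1, hx2⟩, ?_⟩
      rw [tau_ge hm hge]
      have : 2 * x - 1 = 2 * x + (-1:ℝ) := by ring
      rw [this]; exact hxA
  rw [hkey, vol_affine 2 (-1) two_ne_zero]
  congr 1
  rw [abs_of_pos (by norm_num)]
  norm_num

lemma vol_inter_Ico_eq (A : Set ℝ) :
    volume (A ∩ Ico (0:ℝ) 1) = volume (A ∩ Icc 0 1) := by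
  apply le_antisymm (measure_mono (inter_subset_inter_right _ Ico_subset_Icc_self))
  calc volume (A ∩ Icc 0 1) ≤ volume ((A ∩ Ico 0 1) ∪ {1}) := by
        apply measure_mono
        rintro x ⟨hA, h0, h1⟩
        rcases lt_or_eq_of_le h1 with h | h
        · exact Or.inl ⟨hA, h0, h⟩
        · exact Or.inr (by simp [h])
    _ ≤ volume (A ∩ Ico 0 1) + volume ({1} : Set ℝ) := measure_union_le _ _
    _ = volume (A ∩ Ico 0 1) := by simp

lemma tau_inv (hm : 2 ≤ m) (A : Set ℝ) (hA : MeasurableSet A) :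
    volume (Icc (0:ℝ) 1 ∩ tau m ⁻¹' A) = volume (A ∩ Icc 0 1) := by
  have hsplit : Icc (0:ℝ) 1 ∩ tau m ⁻¹' A
      = (Ico (0:ℝ) (1/2) ∩ tau m ⁻¹' A) ∪ (Icc (1/2:ℝ) 1 ∩ tau m ⁻¹' A) := by
    rw [← union_inter_distrib_right]
    congr 1
    rw [Ico_union_Icc_eq_Icc (by norm_num) (by norm_num)]
  have hdis : Disjoint (Ico (0:ℝ) (1/2) ∩ tau m ⁻¹' A) (Icc (1/2:ℝ) 1 ∩ tau m ⁻¹' A) := by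
    apply Disjoint.mono inter_subset_left inter_subset_left
    rw [Set.disjoint_left]
    rintro x ⟨_, h2⟩ ⟨h3, _⟩
    exact absurd h3 (not_le.mpr h2)
  rw [hsplit, measure_union hdis (measurableSet_Icc.inter (tau_measurable hA)),
    lemA_alpha hm A hA, lemA_beta hm A, vol_inter_Ico_eq, ← add_mul,
    ← ENNReal.ofReal_add (by norm_num) (by norm_num)]
  norm_num

lemma V0_null (hm : 2 ≤ m) : volume (Vset m 0 ∩ Icc (0:ℝ) 1) = 0 := by
  have hule : ∀ k, volume (Vset m k ∩ Icc (0:ℝ) 1) ≤ 1 := by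
    intro k
    calc volume (Vset m k ∩ Icc (0:ℝ) 1) ≤ volume (Icc (0:ℝ) 1) :=
          measure_mono inter_subset_right
      _ = 1 := by simp
  have hfin : ∀ k, volume (Vset m k ∩ Icc (0:ℝ) 1) ≠ ⊤ :=
    fun k => ((hule k).trans_lt ENNReal.one_lt_top).ne
  have h0 : volume (Vset m 0 ∩ Icc (0:ℝ) 1)
      = ENNReal.ofReal (1/2) * volume (Vset m 1 ∩ Icc (0:ℝ) 1) := by
    have hset : Vset m 0 ∩ Icc (0:ℝ) 1 = Ico (0:ℝ) (1/2) ∩ tau m ⁻¹' (Vset m 1) := by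
      ext x
      constructor
      · rintro ⟨hv, hx0, hx1⟩
        have hlt := V0_lt_half hv
        exact ⟨⟨hx0, hlt⟩, (V_alpha hlt).mp hv⟩
      · rintro ⟨⟨hx0, hlt⟩, hv⟩
        exact ⟨(V_alpha hlt).mpr hv, hx0, by linarith⟩
    rw [hset, lemA_alpha hm _ (Vset_measurable m 1), vol_inter_Ico_eq]
  have hk : ∀ k : ℕ, volume (Vset m (k+1) ∩ Icc (0:ℝ) 1)
      = ENNReal.ofReal (1/2) * volume (Vset m (k+2) ∩ Icc (0:ℝ) 1)
        + ENNReal.ofReal (1/2) * volume (Vset m k ∩ Icc (0:ℝ) 1) := by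
    intro k
    have hset : Vset m (k+1) ∩ Icc (0:ℝ) 1
        = (Ico (0:ℝ) (1/2) ∩ tau m ⁻¹' (Vset m (k+2))) ∪ (Icc (1/2:ℝ) 1 ∩ tau m ⁻¹' (Vset m k)) := by
      ext x
      constructor
      · rintro ⟨hv, hx0, hx1⟩
        by_cases hlt : x < 1/2
        · exact Or.inl ⟨⟨hx0, hlt⟩, (V_alpha hlt).mp hv⟩
        · exact Or.inr ⟨⟨not_lt.mp hlt, hx1⟩, (V_beta hlt).mp hv⟩
      · rintro (⟨⟨hx0, hlt⟩, hv⟩ | ⟨⟨hge, hx1⟩, hv⟩)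
        · exact ⟨(V_alpha hlt).mpr hv, hx0, by linarith⟩
        · exact ⟨(V_beta (not_lt.mpr hge)).mpr hv, by linarith, hx1⟩
    have hdis : Disjoint (Ico (0:ℝ) (1/2) ∩ tau m ⁻¹' (Vset m (k+2)))
        (Icc (1/2:ℝ) 1 ∩ tau m ⁻¹' (Vset m k)) := by
      apply Disjoint.mono inter_subset_left inter_subset_left
      rw [Set.disjoint_left]
      rintro x ⟨_, h2⟩ ⟨h3, _⟩
      exact absurd h3 (not_le.mpr h2)
    rw [hset, measure_union hdis (measurableSet_Icc.inter (tau_measurable (Vset_measurable m k))),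
      lemA_alpha hm _ (Vset_measurable m (k+2)), lemA_beta hm _, vol_inter_Ico_eq]
  have hrle : ∀ k, (volume (Vset m k ∩ Icc (0:ℝ) 1)).toReal ≤ 1 := by
    intro k
    have := ENNReal.toReal_mono ENNReal.one_ne_top (hule k)
    simpa using this
  have hr0 : (volume (Vset m 1 ∩ Icc (0:ℝ) 1)).toReal
      = 2 * (volume (Vset m 0 ∩ Icc (0:ℝ) 1)).toReal := by
    have h := congrArg ENNReal.toReal h0
    rw [ENNReal.toReal_mul, ENNReal.toReal_ofReal (by norm_num)] at h
    linarith [h]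
  have hrk : ∀ k, 2 * (volume (Vset m (k+1) ∩ Icc (0:ℝ) 1)).toReal
      = (volume (Vset m (k+2) ∩ Icc (0:ℝ) 1)).toReal
        + (volume (Vset m k ∩ Icc (0:ℝ) 1)).toReal := by
    intro k
    have h := congrArg ENNReal.toReal (hk k)
    rw [ENNReal.toReal_add (ENNReal.mul_ne_top ENNReal.ofReal_ne_top (hfin _))
      (ENNReal.mul_ne_top ENNReal.ofReal_ne_top (hfin _)),
      ENNReal.toReal_mul, ENNReal.toReal_mul, ENNReal.toReal_ofReal (by norm_num)] at h
    linarith [h]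
  have hlin : ∀ k : ℕ, (volume (Vset m k ∩ Icc (0:ℝ) 1)).toReal
      = ((k:ℝ)+1) * (volume (Vset m 0 ∩ Icc (0:ℝ) 1)).toReal := by
    have key : ∀ k : ℕ, (volume (Vset m k ∩ Icc (0:ℝ) 1)).toReal
        = ((k:ℝ)+1) * (volume (Vset m 0 ∩ Icc (0:ℝ) 1)).toReal
        ∧ (volume (Vset m (k+1) ∩ Icc (0:ℝ) 1)).toReal
          = ((k:ℝ)+2) * (volume (Vset m 0 ∩ Icc (0:ℝ) 1)).toReal := by
      intro k
      induction k with
      | zero =>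
          constructor
          · norm_num
          · rw [hr0]; norm_num
      | succ k ih =>
          obtain ⟨h1, h2⟩ := ih
          have h3 := hrk k
          constructor
          · push_cast
            push_cast at h2
            linarith
          · push_cast
            push_cast at h1 h2
            linarith
    intro k
    exact (key k).1
  have hr0_zero : (volume (Vset m 0 ∩ Icc (0:ℝ) 1)).toReal = 0 := by
    by_contra hne
    have hpos : 0 < (volume (Vset m 0 ∩ Icc (0:ℝ) 1)).toReal :=
      lt_of_le_of_ne ENNReal.toReal_nonneg (Ne.symm hne)
    obtain ⟨n, hn⟩ := exists_nat_gt (1 / (volume (Vset m 0 ∩ Icc (0:ℝ) 1)).toReal)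
    have h1 : (volume (Vset m n ∩ Icc (0:ℝ) 1)).toReal ≤ 1 := hrle n
    have h2 : (1:ℝ) < ((n:ℝ)+1) * (volume (Vset m 0 ∩ Icc (0:ℝ) 1)).toReal := by
      calc (1:ℝ) = (1 / (volume (Vset m 0 ∩ Icc (0:ℝ) 1)).toReal)
            * (volume (Vset m 0 ∩ Icc (0:ℝ) 1)).toReal := by field_simp
        _ < (n:ℝ) * (volume (Vset m 0 ∩ Icc (0:ℝ) 1)).toReal :=
            mul_lt_mul_of_pos_right hn hpos
        _ ≤ ((n:ℝ)+1) * (volume (Vset m 0 ∩ Icc (0:ℝ) 1)).toReal := by nlinarith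
    rw [hlin n] at h1
    linarith
  rcases (ENNReal.toReal_eq_zero_iff _).mp hr0_zero with h | h
  · exact h
  · exact absurd h (hfin 0)

lemma hb_fst (p : ℝ × ℝ) : (hbaker m (1 / (2 * m)) p).1 = tau m p.1 := by
  unfold hbaker tau
  split <;> rfl

lemma hb_iter_fst (n : ℕ) (p : ℝ × ℝ) :
    ((hbaker m (1 / (2 * m)))^[n] p).1 = (tau m)^[n] p.1 := by
  induction n with
  | zero => rfl
  | succ n ih =>
      rw [Function.iterate_succ_apply', Function.iterate_succ_apply', hb_fst, ih]

lemma tau_mem_Icc (hm : 2 ≤ m) {x : ℝ} (hx : x ∈ Icc (0:ℝ) 1) : tau m x ∈ Icc (0:ℝ) 1 := by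
  by_cases h : x < 1/2
  · rw [tau_lt hm h]
    exact ⟨Int.fract_nonneg _, (Int.fract_lt_one _).le⟩
  · rw [tau_ge hm h]
    have h1 := not_lt.mp h
    have h2 := hx.2
    constructor <;> [linarith; linarith]

lemma tau_iter_mem (hm : 2 ≤ m) {x : ℝ} (hx : x ∈ Icc (0:ℝ) 1) (n : ℕ) :
    (tau m)^[n] x ∈ Icc (0:ℝ) 1 := by
  induction n with
  | zero => exact hx
  | succ n ih => rw [Function.iterate_succ_apply']; exact tau_mem_Icc hm ih

lemma hb_mem (hm : 2 ≤ m) {p : ℝ × ℝ} (hp : p ∈ unitSq) :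
    hbaker m (1 / (2 * m)) p ∈ unitSq := by
  have hx : p.1 ∈ Icc (0:ℝ) 1 := hp.1
  have hy : p.2 ∈ Icc (0:ℝ) 1 := hp.2
  have hm0 : (0:ℝ) < m := mR_pos hm
  constructor
  · rw [hb_fst]
    exact tau_mem_Icc hm hx
  · unfold hbaker
    split_ifs with h
    · show p.2 / m + (⌊p.1 / (1 / (2 * m))⌋ : ℝ) / m ∈ Icc (0:ℝ) 1
      have hxa : p.1 / (1/(2*(m:ℝ))) = 2 * m * p.1 := by
        have hne : (m:ℝ) ≠ 0 := (mR_pos hm).ne'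
        field_simp
      rw [hxa]
      have hlt : p.1 < 1/2 := by rw [hma hm] at h; exact h
      have hfl0 : (0:ℤ) ≤ ⌊2 * (m:ℝ) * p.1⌋ := Int.floor_nonneg.mpr (by nlinarith [hx.1])
      have hflm : ⌊2 * (m:ℝ) * p.1⌋ < (m:ℤ) := by
        apply Int.floor_lt.mpr
        push_cast
        nlinarith
      have hfl0' : (0:ℝ) ≤ ((⌊2 * (m:ℝ) * p.1⌋ : ℤ) : ℝ) := by exact_mod_cast hfl0
      have hflm' : ((⌊2 * (m:ℝ) * p.1⌋ : ℤ) : ℝ) ≤ (m:ℝ) - 1 := by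
        have h3 : ⌊2 * (m:ℝ) * p.1⌋ ≤ (m:ℤ) - 1 := by omega
        have h4 : ((⌊2 * (m:ℝ) * p.1⌋ : ℤ) : ℝ) ≤ (((m:ℤ) - 1 : ℤ) : ℝ) := by
          exact_mod_cast h3
        push_cast at h4
        linarith
      rw [← add_div]
      constructor
      · exact div_nonneg (by linarith [hy.1]) hm0.le
      · rw [div_le_one hm0]
        linarith [hy.2]
    · show (m:ℝ) * p.2 - ((betaIdx m p.2 : ℝ) - 1) ∈ Icc (0:ℝ) 1
      by_cases hy1 : p.2 = 1
      · have hb : betaIdx m p.2 = (m:ℤ) := by simp [betaIdx, hy1]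
        rw [hb, hy1]
        push_cast
        constructor <;> norm_num
      · have hb : betaIdx m p.2 = ⌊(m:ℝ) * p.2⌋ + 1 := by simp [betaIdx, hy1]
        rw [hb]
        push_cast
        have hfl := Int.floor_le ((m:ℝ) * p.2)
        have hfl2 := Int.lt_floor_add_one ((m:ℝ) * p.2)
        constructor <;> [linarith; linarith]

lemma hb_iter_mem (hm : 2 ≤ m) {p : ℝ × ℝ} (hp : p ∈ unitSq) (n : ℕ) :
    (hbaker m (1 / (2 * m)))^[n] p ∈ unitSq := by
  induction n with
  | zero => exact hp
  | succ n ih => rw [Function.iterate_succ_apply']; exact hb_mem hm ih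

lemma log_pos' (hm : 2 ≤ m) : 0 < Real.log m := by
  apply Real.log_pos
  exact_mod_cast Nat.lt_of_lt_of_le Nat.one_lt_two hm

lemma phiC_eq (hm : 2 ≤ m) (q : ℝ × ℝ) :
    phiC m (1 / (2 * m)) q = (wI q.1 : ℝ) * Real.log m := by
  unfold phiC wI
  rw [hma hm]
  split_ifs <;> push_cast <;> ring

lemma birk_eq (hm : 2 ≤ m) (n : ℕ) (p : ℝ × ℝ) :
    birk m (1 / (2 * m)) n p = (TW m n p.1 : ℝ) * Real.log m := by
  unfold birk TW
  have hterm : ∀ k, phiC m (1 / (2 * m)) ((hbaker m (1 / (2 * m)))^[k] p)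
      = (wI ((tau m)^[k] p.1) : ℝ) * Real.log m := by
    intro k
    rw [phiC_eq hm, hb_iter_fst]
  simp only [hterm]
  rw [← Finset.sum_mul]
  norm_cast

lemma birk_neg_iff (hm : 2 ≤ m) (n : ℕ) (p : ℝ × ℝ) :
    birk m (1 / (2 * m)) n p = -Real.log m ↔ TW m n p.1 = -1 := by
  rw [birk_eq hm]
  constructor
  · intro h
    have hL : Real.log m ≠ 0 := (log_pos' hm).ne'
    have h2 : (TW m n p.1 : ℝ) * Real.log m = (-1 : ℝ) * Real.log m := by rw [h]; ring
    have h3 : (TW m n p.1 : ℝ) = -1 := mul_right_cancel₀ hL h2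
    exact_mod_cast h3
  · intro h
    rw [h]
    push_cast
    ring

lemma birk_zero_iff (hm : 2 ≤ m) (n : ℕ) (p : ℝ × ℝ) :
    birk m (1 / (2 * m)) n p = 0 ↔ TW m n p.1 = 0 := by
  rw [birk_eq hm]
  constructor
  · intro h
    have hL : Real.log m ≠ 0 := (log_pos' hm).ne'
    rcases mul_eq_zero.mp h with h2 | h2
    · exact_mod_cast h2
    · exact absurd h2 hL
  · intro h
    rw [h]
    norm_num

lemma mem_beta_iff (hm : 2 ≤ m) {p : ℝ × ℝ} (hp : p ∈ unitSq) (n : ℕ) :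
    (hbaker m (1 / (2 * m)))^[n] p ∈ OmegaBeta m (1 / (2 * m))
      ↔ ¬ ((tau m)^[n] p.1 < 1/2) := by
  have hq := hb_iter_mem hm hp n
  constructor
  · intro h
    have h1 : ((hbaker m (1 / (2 * m)))^[n] p).1 ∈ Icc ((m:ℝ) * (1 / (2 * m))) 1 := h.1
    rw [hma hm, hb_iter_fst] at h1
    exact not_lt.mpr h1.1
  · intro h
    constructor
    · show ((hbaker m (1 / (2 * m)))^[n] p).1 ∈ Icc ((m:ℝ) * (1 / (2 * m))) 1
      rw [hma hm, hb_iter_fst]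
      exact ⟨not_lt.mp h, (tau_iter_mem hm hp.1 n).2⟩
    · exact hq.2

lemma alpha_walk (hm : 2 ≤ m) {x : ℝ} (hx2 : x < 1/2)
    (hfail : ∀ n, 1 ≤ n → ¬(TW m n x = -1 ∧ ¬ ((tau m)^[n] x < 1/2))) :
    x ∈ Vset m 0 := by
  have key : ∀ n, 1 ≤ n → TW m n x ≤ -1 := by
    intro n hn
    induction n, hn using Nat.le_induction with
    | base =>
        rw [TW_one, wI_of_lt hx2]
    | succ n hn ih =>
        rw [TW_succ]
        rcases eq_or_lt_of_le ih with he | hlt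
        · by_cases hb : (tau m)^[n] x < 1/2
          · rw [wI_of_lt hb]; linarith
          · exact absurd ⟨he, hb⟩ (hfail n hn)
        · have := wI_le ((tau m)^[n] x)
          linarith
  intro n
  cases n with
  | zero => simp [TW_zero]
  | succ n =>
      have := key (n+1) (by omega)
      push_cast
      linarith

lemma beta_walk (hm : 2 ≤ m) {x : ℝ} (hx2 : ¬ x < 1/2) (htau : tau m x < 1/2)
    (hfail : ∀ n, 1 ≤ n → ¬(TW m n x = 0 ∧ ¬ ((tau m)^[n] x < 1/2))) :
    tau m (tau m x) ∈ Vset m 0 := by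
  have h1 : TW m 1 x = 1 := by rw [TW_one, wI_of_ge hx2]
  have hit1 : (tau m)^[1] x = tau m x := by simp
  have h2 : TW m 2 x = 0 := by
    rw [show (2:ℕ) = 1 + 1 from rfl, TW_succ, h1, hit1, wI_of_lt htau]
    norm_num
  have key : ∀ n, 2 ≤ n → TW m n x ≤ 0 := by
    intro n hn
    induction n, hn using Nat.le_induction with
    | base => exact h2.le
    | succ n hn ih =>
        rw [TW_succ]
        rcases eq_or_lt_of_le ih with he | hlt
        · by_cases hb : (tau m)^[n] x < 1/2
          · rw [wI_of_lt hb]; linarith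
          · exact absurd ⟨he, hb⟩ (hfail n (by omega))
        · have := wI_le ((tau m)^[n] x)
          linarith
  intro j
  have hit2 : (tau m)^[2] x = tau m (tau m x) := by
    rw [show (2:ℕ) = 1 + 1 from rfl, Function.iterate_add_apply]
    simp
  have hadd := TW_add (m := m) 2 j x
  rw [h2, hit2] at hadd
  have hle := key (2 + j) (by omega)
  push_cast
  linarith [hadd ▸ hle]

end HBproof


open HBproof

/-- **Lemma 2.6.** Let `a = 1/(2m)`.  Define `Q : [0,1]² ∖ E → ℤ₊ ∪ {∞}` by
`Q(p) = inf {n ≥ 1 : S_n φᶜ(p) = -log m and f_a^n(p) ∈ Ω⁺_β}` on `Ω⁺_α` and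
`Q(p) = inf {n ≥ 1 : S_n φᶜ(p) = 0 and f_a^n(p) ∈ Ω⁺_β}` on `Ω⁺_β ∖ E`.
Then `Q < ∞` Lebesgue-a.e. on `[0,1]² ∖ E`; i.e. the set where the corresponding
infimum is over the empty set is Lebesgue-null. -/
theorem Q_finite_ae (m : ℕ) (hm : 2 ≤ m) :
    Leb2 {p : ℝ × ℝ | p ∉ Eset m (1 / (2 * m)) ∧
      ((p ∈ OmegaAlpha m (1 / (2 * m)) ∧
          ∀ n : ℕ, 1 ≤ n → ¬(birk m (1 / (2 * m)) n p = -Real.log m ∧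
            (hbaker m (1 / (2 * m)))^[n] p ∈ OmegaBeta m (1 / (2 * m)))) ∨
        (p ∈ OmegaBeta m (1 / (2 * m)) ∧
          ∀ n : ℕ, 1 ≤ n → ¬(birk m (1 / (2 * m)) n p = 0 ∧
            (hbaker m (1 / (2 * m)))^[n] p ∈ OmegaBeta m (1 / (2 * m)))))} = 0 := by
  classical
  have hmeasV : MeasurableSet (Vset m 0) := Vset_measurable m 0
  have hN2 : volume ((tau m ⁻¹' (tau m ⁻¹' Vset m 0)) ∩ Icc (0:ℝ) 1) = 0 := by
    rw [inter_comm, tau_inv hm _ (tau_measurable hmeasV), inter_comm,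
      tau_inv hm _ hmeasV]
    exact V0_null hm
  have hNmeas : MeasurableSet ((Vset m 0 ∪ tau m ⁻¹' (tau m ⁻¹' Vset m 0)) ∩ Icc (0:ℝ) 1) :=
    (hmeasV.union (tau_measurable (tau_measurable hmeasV))).inter measurableSet_Icc
  have hNnull : volume ((Vset m 0 ∪ tau m ⁻¹' (tau m ⁻¹' Vset m 0)) ∩ Icc (0:ℝ) 1) = 0 := by
    rw [union_inter_distrib_right]
    exact measure_union_null (V0_null hm) hN2
  have hnull2 : Leb2 (Prod.fst ⁻¹' ((Vset m 0 ∪ tau m ⁻¹' (tau m ⁻¹' Vset m 0)) ∩ Icc (0:ℝ) 1)) = 0 := by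
    unfold Leb2
    rw [Measure.restrict_apply (hNmeas.preimage measurable_fst)]
    have hsub2 : Prod.fst ⁻¹' ((Vset m 0 ∪ tau m ⁻¹' (tau m ⁻¹' Vset m 0)) ∩ Icc (0:ℝ) 1) ∩ unitSq
        ⊆ ((Vset m 0 ∪ tau m ⁻¹' (tau m ⁻¹' Vset m 0)) ∩ Icc (0:ℝ) 1) ×ˢ Icc (0:ℝ) 1 := by
      rintro ⟨x, y⟩ ⟨h1, h2⟩
      exact ⟨h1, h2.2⟩
    apply measure_mono_null hsub2
    rw [Measure.volume_eq_prod, Measure.prod_prod, hNnull, zero_mul]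
  refine measure_mono_null ?_ hnull2
  · rintro p ⟨hpE, hcase⟩
    rcases hcase with ⟨hpa, hfail⟩ | ⟨hpb, hfail⟩
    · have hx : p.1 ∈ Ico (0:ℝ) (1/2) := by
        have h : p.1 ∈ Ico (0:ℝ) ((m:ℝ) * (1 / (2 * m))) := hpa.1
        rwa [hma hm] at h
      have hx1 : p.1 ≤ 1 := by
        have := hx.2
        linarith
      have hpu : p ∈ unitSq := ⟨⟨hx.1, hx1⟩, hpa.2⟩
      have hfail' : ∀ n, 1 ≤ n → ¬(TW m n p.1 = -1 ∧ ¬ ((tau m)^[n] p.1 < 1/2)) := by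
        intro n hn hc
        exact hfail n hn ⟨(birk_neg_iff hm n p).mpr hc.1, (mem_beta_iff hm hpu n).mpr hc.2⟩
      exact ⟨Or.inl (alpha_walk hm hx.2 hfail'), hx.1, hx1⟩
    · have hx : p.1 ∈ Icc (1/2:ℝ) 1 := by
        have h : p.1 ∈ Icc ((m:ℝ) * (1 / (2 * m))) 1 := hpb.1
        rwa [hma hm] at h
      have hx0 : (0:ℝ) ≤ p.1 := by
        have := hx.1
        linarith
      have hpu : p ∈ unitSq := ⟨⟨hx0, hx.2⟩, hpb.2⟩
      have hfp : hbaker m (1 / (2 * m)) p ∉ OmegaBeta m (1 / (2 * m)) := fun hc => hpE ⟨hpb, hc⟩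
      have htau1 : tau m p.1 < 1/2 := by
        by_contra hc
        apply hfp
        have h := (mem_beta_iff hm hpu 1).mpr (by simpa using hc)
        simpa using h
      have hfail' : ∀ n, 1 ≤ n → ¬(TW m n p.1 = 0 ∧ ¬ ((tau m)^[n] p.1 < 1/2)) := by
        intro n hn hc
        exact hfail n hn ⟨(birk_zero_iff hm n p).mpr hc.1, (mem_beta_iff hm hpu n).mpr hc.2⟩
      have hV := beta_walk hm (not_lt.mpr hx.1) htau1 hfail'
      exact ⟨Or.inr hV, hx0, hx.2⟩
end
end
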